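/- arXiv:1801.09516 — 5 statements merged into one kernel-verified Lean document; each statement's English description precedes it below -/
import Mathlib

section
/- For positive integers n ≥ 1 and 0 ≤ d ≤ n, the number of binary necklaces of length n and density d (i.e., lexicographically least representatives of rotation classes of binary words of length n containing exactly d ones) equals (1/n) · Σ_{j | gcd(n,d)} φ(j) · C(n/j, d/j), where φ is Euler's totient function. -/
/-- `w` is a necklace: lexicographically ≤ all of its rotations. -/
def IsNecklace (w : List ℕ) : Prop := ∀ i : ℕ, w ≤ w.rotate i

/-- `w` is a Lyndon word: nonempty and strictly smaller than all nontrivial rotations. -/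
def IsLyndon (w : List ℕ) : Prop :=
  w ≠ [] ∧ ∀ i : ℕ, 0 < i → i < w.length → w < w.rotate i

/-- `w` is a prenecklace over the alphabet `{0,…,k-1}`. -/
def IsPrenecklace (k : ℕ) (w : List ℕ) : Prop :=
  ∃ v : List ℕ, w <+: v ∧ (∀ a ∈ v, a < k) ∧ IsNecklace v

/-- Length of the longest prefix of `w` that is a Lyndon word. -/
noncomputable def lyn (w : List ℕ) : ℕ :=
  sSup {p | p ≤ w.length ∧ IsLyndon (w.take p)}

/-- Number of binary necklaces of length `n` and density `d`. -/
noncomputable def N (n d : ℕ) : ℕ :=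
  {w : List ℕ | w.length = n ∧ (∀ a ∈ w, a < 2) ∧ w.count 1 = d ∧ IsNecklace w}.ncard

/-- Number of binary Lyndon words of length `n` and density `d`. -/
noncomputable def L (n d : ℕ) : ℕ :=
  {w : List ℕ | w.length = n ∧ (∀ a ∈ w, a < 2) ∧ w.count 1 = d ∧ IsLyndon w}.ncard

/-- Number of necklaces over `{0,…,k-1}` with content `c`. -/
noncomputable def Nk (k : ℕ) (c : Fin k → ℕ) : ℕ :=
  {w : List ℕ | (∀ a ∈ w, a < k) ∧ (∀ i : Fin k, w.count i.val = c i) ∧ IsNecklace w}.ncard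

/-- Number of Lyndon words over `{0,…,k-1}` with content `c`. -/
noncomputable def Lk (k : ℕ) (c : Fin k → ℕ) : ℕ :=
  {w : List ℕ | (∀ a ∈ w, a < k) ∧ (∀ i : Fin k, w.count i.val = c i) ∧ IsLyndon w}.ncard

lemma rotate_mul_fix {w : List ℕ} {i : ℕ} (h : w.rotate i = w) (k : ℕ) :
    w.rotate (k * i) = w := by
  induction k with
  | zero => simp
  | succ k ih => rw [Nat.succ_mul, ← List.rotate_rotate, ih, h]

lemma rotate_gcd_fix {n : ℕ} (hn : 0 < n) {w : List ℕ} (hw : w.length = n) {i : ℕ}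
    (h : w.rotate i = w) : w.rotate (Nat.gcd n i) = w := by
  haveI : NeZero n := ⟨hn.ne'⟩
  set g := Nat.gcd n i with hg
  set m : ℕ := ((Nat.gcdB n i : ZMod n)).val with hm
  have key : ((m * i : ℕ) : ZMod n) = ((g : ℕ) : ZMod n) := by
    push_cast
    rw [hm, ZMod.natCast_val, ZMod.cast_id]
    have hb := Nat.gcd_eq_gcd_ab n i
    have h2 : ((g : ℤ) : ZMod n) = ((n : ℤ) * Nat.gcdA n i + (i : ℤ) * Nat.gcdB n i : ℤ) := by
      exact_mod_cast congrArg (Int.cast : ℤ → ZMod n) hb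
    push_cast at h2
    rw [h2]
    simp [ZMod.natCast_self]
    ring
  have key2 : (m * i) % n = g % n := by
    rwa [ZMod.natCast_eq_natCast_iff, Nat.ModEq] at key
  have h1 : w.rotate (m * i) = w := rotate_mul_fix h m
  calc w.rotate g = w.rotate (g % n) := by rw [← hw, List.rotate_mod]
    _ = w.rotate ((m * i) % n) := by rw [key2]
    _ = w.rotate (m * i) := by rw [← hw, List.rotate_mod]
    _ = w := h1

lemma rotate_of_gcd_fix {n : ℕ} {w : List ℕ} {i : ℕ}
    (h : w.rotate (Nat.gcd n i) = w) : w.rotate i = w := by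
  obtain ⟨k, hk⟩ : Nat.gcd n i ∣ i := Nat.gcd_dvd_right n i
  rw [hk, mul_comm]
  exact rotate_mul_fix h k

lemma rep_length (m : ℕ) (u : List ℕ) : ((List.replicate m u).flatten).length = m * u.length := by
  simp [List.length_flatten, List.map_replicate, List.sum_replicate, smul_eq_mul]

lemma rep_succ (m : ℕ) (u : List ℕ) :
    (List.replicate (m + 1) u).flatten = u ++ (List.replicate m u).flatten := by
  rw [List.replicate_succ, List.flatten_cons]

lemma rep_count (m : ℕ) (u : List ℕ) (a : ℕ) :
    ((List.replicate m u).flatten).count a = m * u.count a := by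
  induction m with
  | zero => simp
  | succ m ih => rw [rep_succ, List.count_append, ih]; ring

lemma rep_mem {m : ℕ} {u : List ℕ} {a : ℕ} (h : a ∈ (List.replicate m u).flatten) : a ∈ u := by
  obtain ⟨l, hl, ha⟩ := List.mem_flatten.mp h
  rwa [List.eq_of_mem_replicate hl] at ha

lemma rep_rotate (m : ℕ) (u : List ℕ) :
    ((List.replicate (m + 1) u).flatten).rotate u.length = (List.replicate (m + 1) u).flatten := by
  conv_lhs => rw [rep_succ]
  rw [List.rotate_append_length_eq]
  conv_rhs => rw [List.replicate_succ']
  simp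

lemma comm_rep : ∀ (m : ℕ) (u v : List ℕ), v.length = m * u.length →
    u ++ v = v ++ u → v = (List.replicate m u).flatten := by
  intro m
  induction m with
  | zero => intro u v h _; simp_all [List.length_eq_zero_iff.mp]
  | succ m ih =>
    intro u v hlen hc
    have hu : u.length ≤ v.length := by rw [hlen]; nlinarith [Nat.succ_mul m u.length]
    have htake : u = v.take u.length := by
      have := congrArg (List.take u.length) hc
      rwa [List.take_left, List.take_append_of_le_length hu] at this
    set v' := v.drop u.length with hv'
    have hv : v = u ++ v' := by rw [htake, hv', List.take_append_drop]
    have hlen' : v'.length = m * u.length := by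
      rw [hv', List.length_drop, hlen, Nat.succ_mul]; omega
    have hc' : u ++ v' = v' ++ u := by
      have : u ++ (u ++ v') = u ++ (v' ++ u) := by
        conv_lhs => rw [← hv, hc, hv]
        rw [List.append_assoc]
      exact List.append_cancel_left this
    rw [hv, ih u v' hlen' hc', rep_succ]

lemma fix_eq_rep {n g : ℕ} (hn : 0 < n) (hg : 0 < g) (hgn : g ∣ n) {w : List ℕ}
    (hw : w.length = n) (h : w.rotate g = w) :
    w = (List.replicate (n / g) (w.take g)).flatten := by
  have hgle : g ≤ n := Nat.le_of_dvd hn hgn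
  set u := w.take g with hu
  set v := w.drop g with hv
  have hul : u.length = g := by rw [hu, List.length_take]; omega
  have hvl : v.length = n - g := by rw [hv, List.length_drop, hw]
  have hw1 : w = u ++ v := (List.take_append_drop g w).symm
  have hw2 : w = v ++ u := by
    rw [← h, List.rotate_eq_drop_append_take (by omega : g ≤ w.length)]
  have hc : u ++ v = v ++ u := by rw [← hw1, ← hw2]
  have hm : 0 < n / g := Nat.div_pos hgle hg
  have hlen' : v.length = (n / g - 1) * u.length := by
    rw [hvl, hul, Nat.sub_one_mul, Nat.div_mul_cancel hgn]
  have hrep := comm_rep (n / g - 1) u v hlen' hc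
  have hs : n / g - 1 + 1 = n / g := by omega
  rw [hw1, hrep, ← rep_succ, hs]
open Finset

def words (n d : ℕ) : Finset (List ℕ) :=
  ((Finset.univ : Finset (Fin n → Fin 2)).image fun f => List.ofFn fun i => (f i : ℕ)).filter
    fun w => w.count 1 = d

lemma mem_words {n d : ℕ} {w : List ℕ} :
    w ∈ words n d ↔ w.length = n ∧ (∀ a ∈ w, a < 2) ∧ w.count 1 = d := by
  simp only [words, mem_filter, mem_image, mem_univ, true_and]
  constructor
  · rintro ⟨⟨f, rfl⟩, hc⟩
    refine ⟨by simp, ?_, hc⟩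
    intro a ha
    obtain ⟨i, hi⟩ := List.mem_ofFn.mp ha
    rw [← hi]
    exact (f i).isLt
  · rintro ⟨hl, h2, hc⟩
    refine ⟨⟨fun i => ⟨w[(i : ℕ)]'(by omega), h2 _ (List.getElem_mem _)⟩, ?_⟩, hc⟩
    apply List.ext_getElem (by simp [hl])
    intro i h1' h2'
    rw [List.getElem_ofFn]

lemma count_card (w : List ℕ) :
    ((Finset.range w.length).filter fun i => w.getD i 0 = 1).card = w.count 1 := by
  induction w using List.reverseRecOn with
  | nil => simp
  | append_singleton t a ih =>
    have hfc : ((Finset.range t.length).filter fun i => (t ++ [a]).getD i 0 = 1) =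
        ((Finset.range t.length).filter fun i => t.getD i 0 = 1) := by
      apply Finset.filter_congr
      intro i hi
      rw [List.getD_append _ _ _ _ (Finset.mem_range.mp hi)]
    have hlast : (t ++ [a]).getD t.length 0 = a := by
      rw [List.getD_append_right _ _ _ _ (le_refl _)]
      simp
    rw [List.length_append, List.length_singleton, Finset.range_add_one, Finset.filter_insert,
      List.count_append]
    by_cases ha : a = 1
    · rw [if_pos (by rw [hlast, ha]), Finset.card_insert_of_notMem
        (fun hmem => by simpa using (Finset.mem_filter.mp hmem).1), hfc, ih, ha]
      simp
    · rw [if_neg (by rw [hlast]; exact ha), hfc, ih]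
      simp [List.count_singleton', ha]

lemma getD_map_range {g i : ℕ} (f : ℕ → ℕ) (hi : i < g) :
    (List.map f (List.range g)).getD i 0 = f i := by
  rw [List.getD_eq_getElem _ _ (by simpa using hi)]
  simp

lemma card_words (g e : ℕ) : (words g e).card = Nat.choose g e := by
  rcases le_or_gt e g with he | he
  · conv_rhs => rw [← Finset.card_range g, ← Finset.card_powersetCard e (Finset.range g)]
    apply Finset.card_bij' (fun w _ => (Finset.range g).filter fun i => w.getD i 0 = 1)
      (fun s _ => List.map (fun k => if k ∈ s then 1 else 0) (List.range g))
    · intro w hw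
      obtain ⟨hl, h2, _⟩ := mem_words.mp hw
      apply List.ext_getElem (by simp [hl])
      intro i hi1 hi2
      have hig : i < g := by simpa using hi1
      rw [List.getElem_map, List.getElem_range]
      have hwi : w[i]'hi2 < 2 := h2 _ (List.getElem_mem _)
      by_cases h1 : w[i]'hi2 = 1
      · rw [if_pos, h1]
        simp only [Finset.mem_filter, Finset.mem_range]
        exact ⟨by omega, by rw [List.getD_eq_getElem _ _ hi2, h1]⟩
      · rw [if_neg, ]
        · omega
        · simp only [Finset.mem_filter, Finset.mem_range]
          rintro ⟨-, hc⟩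
          rw [List.getD_eq_getElem _ _ hi2] at hc
          exact h1 hc
    · intro s hs
      rw [Finset.mem_powersetCard] at hs
      ext k
      simp only [Finset.mem_filter, Finset.mem_range]
      constructor
      · rintro ⟨hk, hc⟩
        rw [getD_map_range _ hk] at hc
        by_contra hmem; simp [hmem] at hc
      · intro hk
        have hkg : k < g := Finset.mem_range.mp (hs.1 hk)
        exact ⟨hkg, by rw [getD_map_range _ hkg]; simp [hk]⟩

    · intro w hw
      obtain ⟨hl, h2, hc⟩ := mem_words.mp hw
      rw [Finset.mem_powersetCard]
      exact ⟨Finset.filter_subset _ _, by rw [← hl, count_card, hc]⟩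
    · intro s hs
      rw [Finset.mem_powersetCard] at hs
      obtain ⟨hsub, hcard⟩ := hs
      rw [mem_words]
      refine ⟨by simp, ?_, ?_⟩
      · intro a ha
        obtain ⟨k, _, hk⟩ := List.mem_map.mp ha
        rw [← hk]; split <;> omega
      · have hlen : (List.map (fun k => if k ∈ s then 1 else 0) (List.range g)).length = g := by
          simp
        rw [← count_card, hlen]
        have : ((Finset.range g).filter fun i =>
            (List.map (fun k => if k ∈ s then 1 else 0) (List.range g)).getD i 0 = 1) =
            (Finset.range g).filter fun i => i ∈ s := by
          apply Finset.filter_congr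
          intro i hi
          rw [getD_map_range _ (Finset.mem_range.mp hi)]
          constructor
          · intro h; by_contra hmem; simp [hmem] at h
          · intro h; simp [h]
        rw [this, ← hcard]
        congr 1
        ext k
        simp only [Finset.mem_filter, Finset.mem_range, and_iff_right_iff_imp]
        intro hk
        exact Finset.mem_range.mp (hsub hk)
  · rw [Nat.choose_eq_zero_of_lt he, Finset.card_eq_zero, Finset.eq_empty_iff_forall_notMem]
    intro w hw
    obtain ⟨hl, -, hc⟩ := mem_words.mp hw
    have := w.count_le_length (a := 1)
    omega

lemma card_Fx {n : ℕ} (d : ℕ) {g : ℕ} (hn : 0 < n) (hg : g ∣ n) :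
    ((words n d).filter fun w => w.rotate g = w).card =
      if (n / g) ∣ d then Nat.choose g (d / (n / g)) else 0 := by
  have hg0 : 0 < g := Nat.pos_of_dvd_of_pos hg hn
  set m := n / g with hm
  have hm0 : 0 < m := Nat.div_pos (Nat.le_of_dvd hn hg) hg0
  have hmg : m * g = n := Nat.div_mul_cancel hg
  by_cases hmd : m ∣ d
  · rw [if_pos hmd, ← card_words g (d / m)]
    refine Finset.card_bij' (fun w _ => w.take g)
      (fun u _ => (List.replicate m u).flatten) ?hi ?hj ?left_inv ?right_inv
    case hi =>
      beta_reduce -- hi : take g w ∈ words g (d/m)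
      intro w hw
      rw [Finset.mem_filter] at hw
      obtain ⟨hl, h2, hc⟩ := mem_words.mp hw.1
      have hrep := fix_eq_rep hn hg0 hg hl hw.2
      rw [mem_words]
      refine ⟨by rw [List.length_take, hl]; exact min_eq_left (Nat.le_of_dvd hn hg), ?_, ?_⟩
      · intro a ha; exact h2 a (List.mem_of_mem_take ha)
      · have h3 := rep_count m (w.take g) 1
        rw [← hrep, hc] at h3
        rw [mul_comm] at h3
        exact (Nat.div_eq_of_eq_mul_left hm0 h3).symm
    case hj =>
      beta_reduce -- hj : flatten (replicate m u) ∈ filter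
      intro u hu
      obtain ⟨hl, h2, hc⟩ := mem_words.mp hu
      rw [Finset.mem_filter]
      refine ⟨mem_words.mpr ⟨by rw [rep_length, hl, hmg], ?_, ?_⟩, ?_⟩
      · intro a ha; exact h2 a (rep_mem ha)
      · rw [rep_count, hc, Nat.mul_div_cancel' hmd]
      · have hms : m = (m - 1) + 1 := by omega
        rw [hms, ← hl]
        exact rep_rotate (m - 1) u

    case left_inv =>
      beta_reduce -- left_inv : flatten (replicate m (take g w)) = w
      intro w hw
      rw [Finset.mem_filter] at hw
      obtain ⟨hl, -, -⟩ := mem_words.mp hw.1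
      exact (fix_eq_rep hn hg0 hg hl hw.2).symm
    case right_inv =>
      beta_reduce -- right_inv : take g (flatten (replicate m u)) = u
      intro u hu
      obtain ⟨hl, -, -⟩ := mem_words.mp hu
      have hms : m = (m - 1) + 1 := by omega
      rw [hms, rep_succ, ← hl, List.take_left]
  · rw [if_neg hmd, Finset.card_eq_zero, Finset.eq_empty_iff_forall_notMem]
    intro w hw
    rw [Finset.mem_filter] at hw
    obtain ⟨hl, -, hc⟩ := mem_words.mp hw.1
    have hrep := fix_eq_rep hn hg0 hg hl hw.2
    have := rep_count m (w.take g) 1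
    rw [← hrep, hc] at this
    exact hmd ⟨_, this⟩

abbrev Wrd (n d : ℕ) := {w : List ℕ // w ∈ words n d}

lemma Wrd.len {n d : ℕ} (x : Wrd n d) : x.1.length = n := (mem_words.mp x.2).1

lemma rot_mem {n d : ℕ} (x : Wrd n d) (i : ℕ) : x.1.rotate i ∈ words n d := by
  obtain ⟨hl, h2, hc⟩ := mem_words.mp x.2
  refine mem_words.mpr ⟨by rw [List.length_rotate, hl], ?_, ?_⟩
  · intro a ha
    exact h2 a ((List.mem_rotate).mp ha)
  · rw [(List.rotate_perm x.1 i).count_eq, hc]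

instance rotAction (n d : ℕ) [NeZero n] : AddAction (ZMod n) (Wrd n d) where
  vadd i x := ⟨x.1.rotate i.val, rot_mem x i.val⟩
  zero_vadd x := by
    apply Subtype.ext
    show x.1.rotate (0 : ZMod n).val = x.1
    rw [ZMod.val_zero, List.rotate_zero]
  add_vadd a b x := by
    apply Subtype.ext
    show x.1.rotate ((a + b).val) = (x.1.rotate b.val).rotate a.val
    have h := List.rotate_mod (x.1) (b.val + a.val)
    rw [Wrd.len x] at h
    rw [List.rotate_rotate, ZMod.val_add, add_comm a.val b.val, h]

lemma wvadd_def {n d : ℕ} [NeZero n] (a : ZMod n) (x : Wrd n d) :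
    (a +ᵥ x : Wrd n d).1 = x.1.rotate a.val := rfl

/-- Enumeration formula for binary necklaces with fixed density. -/
theorem necklace_count_formula (n d : ℕ) (hn : 1 ≤ n) (hd : d ≤ n) :
    n * N n d = ∑ j ∈ (Nat.gcd n d).divisors, Nat.totient j * Nat.choose (n / j) (d / j) := by
  classical
  haveI : NeZero n := ⟨by omega⟩
  have hn0 : 0 < n := hn
  set β := Wrd n d with hβ
  haveI fFix : ∀ a : ZMod n, Fintype (AddAction.fixedBy β a) := fun a => Fintype.ofFinite _
  haveI fΩ : Fintype (Quotient (AddAction.orbitRel (ZMod n) β)) := Fintype.ofFinite _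
  have hburn := AddAction.sum_card_fixedBy_eq_card_orbits_mul_card_addGroup (ZMod n) β
  -- identify card of quotient with N n d
  set S := {w : List ℕ | w.length = n ∧ (∀ a ∈ w, a < 2) ∧ w.count 1 = d ∧ IsNecklace w} with hS
  have hΩ : Fintype.card (Quotient (AddAction.orbitRel (ZMod n) β)) = N n d := by
    have hf : Function.Bijective (fun x : S =>
        (Quotient.mk (AddAction.orbitRel (ZMod n) β)
          ⟨x.1, mem_words.mpr ⟨x.2.1, x.2.2.1, x.2.2.2.1⟩⟩)) := by
      constructor
      · rintro ⟨w₁, h₁⟩ ⟨w₂, h₂⟩ h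
        have h' := Quotient.eq.mp h
        have h'' := AddAction.orbitRel_apply.mp h'
        obtain ⟨g, hg⟩ := AddAction.mem_orbit_iff.mp h''
        have hg' : w₂.rotate g.val = w₁ := congrArg Subtype.val hg
        have hle1 : w₂ ≤ w₁ := hg' ▸ h₂.2.2.2 g.val
        have hg₂ : (-g) +ᵥ (⟨w₁, mem_words.mpr ⟨h₁.1, h₁.2.1, h₁.2.2.1⟩⟩ : β)
            = ⟨w₂, mem_words.mpr ⟨h₂.1, h₂.2.1, h₂.2.2.1⟩⟩ := by
          rw [← hg, ← add_vadd, neg_add_cancel, zero_vadd]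
        have hg₂' : w₁.rotate (-g).val = w₂ := congrArg Subtype.val hg₂
        have hle2 : w₁ ≤ w₂ := hg₂' ▸ h₁.2.2.2 (-g).val
        exact Subtype.ext (le_antisymm hle2 hle1)
      · intro q
        obtain ⟨x, rfl⟩ := Quotient.exists_rep q
        obtain ⟨w, hw⟩ := x
        have hwl : w.length = n := (mem_words.mp hw).1
        have hRne : ((Finset.range n).image (fun i => w.rotate i)).Nonempty :=
          ⟨w.rotate 0, Finset.mem_image.mpr ⟨0, Finset.mem_range.mpr hn0, rfl⟩⟩
        obtain ⟨i₀, hi₀, hmi⟩ := Finset.mem_image.mp (Finset.min'_mem _ hRne)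
        have hmin : ∀ r ∈ (Finset.range n).image (fun i => w.rotate i), w.rotate i₀ ≤ r := by
          intro r hr
          rw [hmi]
          exact Finset.min'_le _ _ hr
        have hneck : IsNecklace (w.rotate i₀) := by
          intro i
          have h1 : (w.rotate i₀).rotate i = w.rotate ((i₀ + i) % n) := by
            rw [List.rotate_rotate, ← hwl, List.rotate_mod]
          rw [h1]
          exact hmin _ (Finset.mem_image.mpr ⟨(i₀ + i) % n,
            Finset.mem_range.mpr (Nat.mod_lt _ hn0), rfl⟩)
        have hmem : w.rotate i₀ ∈ words n d := rot_mem ⟨w, hw⟩ i₀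
        obtain ⟨hl', h2', hc'⟩ := mem_words.mp hmem
        refine ⟨⟨w.rotate i₀, hl', h2', hc', hneck⟩, ?_⟩
        apply Quotient.sound
        apply AddAction.orbitRel_apply.mpr
        apply AddAction.mem_orbit_iff.mpr
        refine ⟨(i₀ : ZMod n), ?_⟩
        apply Subtype.ext
        rw [wvadd_def, ZMod.val_cast_of_lt (Finset.mem_range.mp hi₀)]
    have h1 : N n d = Nat.card S := (Nat.card_coe_set_eq S).symm
    rw [h1, Nat.card_eq_of_bijective _ hf]
    exact Nat.card_eq_fintype_card.symm
  have hfix : ∀ a : ZMod n, Fintype.card (AddAction.fixedBy β a) =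
      ((words n d).filter fun w => w.rotate a.val = w).card := by
    intro a
    have e : AddAction.fixedBy β a ≃ {w // w ∈ (words n d).filter fun w => w.rotate a.val = w} :=
      { toFun := fun x => ⟨x.1.1, Finset.mem_filter.mpr ⟨x.1.2,
          congrArg Subtype.val (AddAction.mem_fixedBy.mp x.2)⟩⟩
        invFun := fun w => ⟨⟨w.1, (Finset.mem_filter.mp w.2).1⟩,
          AddAction.mem_fixedBy.mpr (Subtype.ext (Finset.mem_filter.mp w.2).2)⟩
        left_inv := fun x => Subtype.ext (Subtype.ext rfl)
        right_inv := fun w => rfl }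
    rw [Fintype.card_congr e, Fintype.card_coe]
  set F : ℕ → ℕ := fun g => ((words n d).filter fun w => w.rotate g = w).card with hF
  have hsum1 : (∑ a : ZMod n, Fintype.card (AddAction.fixedBy β a))
      = ∑ i ∈ Finset.range n, F i := by
    refine Finset.sum_bij' (fun (a : ZMod n) _ => a.val) (fun i _ => (i : ZMod n))
      ?_ ?_ ?_ ?_ ?_
    · intro a _; exact Finset.mem_range.mpr (ZMod.val_lt a)
    · intro i _; exact Finset.mem_univ _
    · intro a _
      show ((a.val : ℕ) : ZMod n) = a
      rw [ZMod.natCast_val, ZMod.cast_id]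
    · intro i hi; exact ZMod.val_cast_of_lt (Finset.mem_range.mp hi)
    · intro a _; exact hfix a
  have hsum2 : (∑ i ∈ Finset.range n, F i) = ∑ i ∈ Finset.range n, F (Nat.gcd n i) := by
    refine Finset.sum_congr rfl fun i _ => ?_
    simp only [hF]
    congr 1
    apply Finset.filter_congr
    intro w hw
    have hl : w.length = n := (mem_words.mp hw).1
    constructor
    · intro h; exact rotate_gcd_fix hn0 hl h
    · intro h; exact rotate_of_gcd_fix h
  have hmaps : ∀ i ∈ Finset.range n, Nat.gcd n i ∈ n.divisors :=
    fun i _ => Nat.mem_divisors.mpr ⟨Nat.gcd_dvd_left _ _, by omega⟩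
  have hsum3 : (∑ i ∈ Finset.range n, F (Nat.gcd n i))
      = ∑ j ∈ n.divisors, Nat.totient (n / j) * F j := by
    rw [← Finset.sum_fiberwise_of_maps_to hmaps (fun i => F (Nat.gcd n i))]
    refine Finset.sum_congr rfl fun j hj => ?_
    have hcongr : ∀ i ∈ (Finset.range n).filter (fun i => Nat.gcd n i = j),
        F (Nat.gcd n i) = F j := fun i hi => by rw [(Finset.mem_filter.mp hi).2]
    rw [Finset.sum_congr rfl hcongr, Finset.sum_const, smul_eq_mul]
    congr 1
    exact (Nat.totient_div_of_dvd (Nat.dvd_of_mem_divisors hj)).symm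
  have hsum4 : (∑ j ∈ n.divisors, Nat.totient (n / j) * F j)
      = ∑ j ∈ n.divisors, Nat.totient j * F (n / j) := by
    rw [← Nat.sum_div_divisors n (fun g => Nat.totient (n / g) * F g)]
    refine Finset.sum_congr rfl fun j hj => ?_
    rw [Nat.div_div_self (Nat.dvd_of_mem_divisors hj) (by omega)]
  have hFval : ∀ j ∈ n.divisors, F (n / j) =
      if j ∣ d then Nat.choose (n / j) (d / j) else 0 := by
    intro j hj
    have hjd : j ∣ n := Nat.dvd_of_mem_divisors hj
    have hdvd : (n / j) ∣ n := Nat.div_dvd_of_dvd hjd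
    rw [hF]
    beta_reduce
    rw [card_Fx d hn0 hdvd, Nat.div_div_self hjd (by omega)]
  have hdivfilt : (n.divisors).filter (· ∣ d) = (Nat.gcd n d).divisors := by
    ext j
    simp only [Finset.mem_filter, Nat.mem_divisors]
    constructor
    · rintro ⟨⟨hjn, -⟩, hjd⟩
      refine ⟨Nat.dvd_gcd hjn hjd, ?_⟩
      intro h0
      rw [Nat.gcd_eq_zero_iff] at h0
      omega
    · rintro ⟨hj, -⟩
      exact ⟨⟨hj.trans (Nat.gcd_dvd_left _ _), by omega⟩, hj.trans (Nat.gcd_dvd_right _ _)⟩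
  have hsum5 : (∑ j ∈ n.divisors, Nat.totient j * F (n / j))
      = ∑ j ∈ (Nat.gcd n d).divisors, Nat.totient j * Nat.choose (n / j) (d / j) := by
    rw [← hdivfilt, Finset.sum_filter]
    refine Finset.sum_congr rfl fun j hj => ?_
    rw [hFval j hj, mul_ite, mul_zero]
  calc n * N n d
      = Fintype.card (Quotient (AddAction.orbitRel (ZMod n) β)) * Fintype.card (ZMod n) := by
        rw [hΩ, ZMod.card, mul_comm]
    _ = ∑ a : ZMod n, Fintype.card (AddAction.fixedBy β a) := hburn.symm
    _ = ∑ i ∈ Finset.range n, F i := hsum1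
    _ = ∑ i ∈ Finset.range n, F (Nat.gcd n i) := hsum2
    _ = ∑ j ∈ n.divisors, Nat.totient (n / j) * F j := hsum3
    _ = ∑ j ∈ n.divisors, Nat.totient j * F (n / j) := hsum4
    _ = ∑ j ∈ (Nat.gcd n d).divisors, Nat.totient j * Nat.choose (n / j) (d / j) := hsum5
end

section
/- Let k ≥ 2 and n_0,…,n_{k−1} ≥ 1. The number of necklaces with content (n_0,…,n_{k−1}) over {0,…,k−1} equals (1/n) · Σ_{j | gcd(n_0,…,n_{k−1})} φ(j) · (n/j)! / ((n_0/j)! ⋯ (n_{k−1}/j)!), where n = n_0 + ⋯ + n_{k−1}. -/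
open Finset
open scoped Nat
set_option linter.unusedSectionVars false
set_option maxHeartbeats 1000000

section MinRot
open List

lemma rotate_eq_of_mod {w : List ℕ} {s t : ℕ} (h : s % w.length = t % w.length) :
    w.rotate s = w.rotate t := by
  rw [← List.rotate_mod w s, h, List.rotate_mod]

lemma rotSet_nonempty {w : List ℕ} (h : w ≠ []) :
    ((Finset.range w.length).image (fun i => w.rotate i)).Nonempty := by
  apply Finset.Nonempty.image
  rw [Finset.nonempty_range_iff]
  exact (List.length_pos_iff.mpr h).ne'

noncomputable def minRot (w : List ℕ) : List ℕ :=
  if h : w = [] then [] else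
    ((Finset.range w.length).image (fun i => w.rotate i)).min' (rotSet_nonempty h)

lemma minRot_mem {w : List ℕ} (h : w ≠ []) :
    ∃ i, i < w.length ∧ minRot w = w.rotate i := by
  rw [minRot, dif_neg h]
  have := Finset.min'_mem _ (rotSet_nonempty h)
  rw [Finset.mem_image] at this
  obtain ⟨i, hi, hw⟩ := this
  exact ⟨i, Finset.mem_range.mp hi, hw.symm⟩

lemma minRot_le {w : List ℕ} (h : w ≠ []) (i : ℕ) : minRot w ≤ w.rotate i := by
  rw [minRot, dif_neg h]
  have hlen : 0 < w.length := List.length_pos_iff.mpr h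
  have : w.rotate i = w.rotate (i % w.length) := (List.rotate_mod w i).symm
  rw [this]
  apply Finset.min'_le
  exact Finset.mem_image_of_mem _ (Finset.mem_range.mpr (Nat.mod_lt _ hlen))

lemma isNecklace_minRot (w : List ℕ) : IsNecklace (minRot w) := by
  by_cases h : w = []
  · subst h
    intro i
    rw [minRot, dif_pos rfl, List.rotate_nil]
  · obtain ⟨i₀, hi₀, he⟩ := minRot_mem h
    intro j
    rw [he, List.rotate_rotate]
    rw [← he]
    exact minRot_le h _

lemma minRot_eq_self {w : List ℕ} (h : IsNecklace w) : minRot w = w := by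
  by_cases hw : w = []
  · subst hw; rw [minRot, dif_pos rfl]
  · refine _root_.le_antisymm ?_ ?_
    · have := minRot_le hw 0
      rwa [List.rotate_zero] at this
    · obtain ⟨i₀, _, he⟩ := minRot_mem hw
      rw [he]; exact h i₀

lemma minRot_rotate (w : List ℕ) (t : ℕ) : minRot (w.rotate t) = minRot w := by
  by_cases hw : w = []
  · subst hw; rw [List.rotate_nil]
  · have hlen : 0 < w.length := List.length_pos_iff.mpr hw
    have hwr : w.rotate t ≠ [] := by
      intro h; apply hw; simpa using congrArg List.length h
    have key : ∀ i : ℕ, ∃ s : ℕ, (w.rotate t).rotate s = w.rotate i := by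
      intro i
      refine ⟨w.length - t % w.length + i, ?_⟩
      rw [List.rotate_rotate]
      apply rotate_eq_of_mod
      have h1 := Nat.div_add_mod t w.length
      have h2 := Nat.mod_lt t hlen
      have h4 : w.length * (t / w.length + 1) = w.length * (t / w.length) + w.length := by
        ring
      have h3 : t + (w.length - t % w.length + i) = w.length * (t / w.length + 1) + i := by
        omega
      rw [h3, Nat.mul_add_mod]
    refine _root_.le_antisymm ?_ ?_
    · obtain ⟨i₀, _, he⟩ := minRot_mem hw
      obtain ⟨s, hs⟩ := key i₀
      rw [he, ← hs]
      exact minRot_le hwr s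
    · obtain ⟨i₁, _, he⟩ := minRot_mem hwr
      rw [he, List.rotate_rotate]
      exact minRot_le hw _

lemma mem_minRot {w : List ℕ} (h : w ≠ []) {a : ℕ} (ha : a ∈ minRot w) : a ∈ w := by
  obtain ⟨i, _, he⟩ := minRot_mem h
  rw [he] at ha
  exact (List.mem_rotate).mp ha

lemma count_minRot {w : List ℕ} (h : w ≠ []) (a : ℕ) : (minRot w).count a = w.count a := by
  obtain ⟨i, _, he⟩ := minRot_mem h
  rw [he]
  exact (List.rotate_perm w i).count_eq a

end MinRot

section ContDef
variable {α β : Type*} [Fintype α] [DecidableEq α] [Fintype β] [DecidableEq β]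
def cont (f : α → β) (b : β) : ℕ := (univ.filter (fun x => f x = b)).card


lemma cont_comp_perm (f : α → β) (σ : Equiv.Perm α) (b : β) :
    cont (f ∘ σ) b = cont f b := by
  unfold cont
  apply Finset.card_bij (fun x _ => σ x)
  · intro x hx; simp_all
  · intro x hx y hy h; exact σ.injective h
  · intro y hy; exact ⟨σ.symm y, by simp_all, by simp⟩

lemma exists_perm_comp (f g : α → β) (h : ∀ b, cont f b = cont g b) :
    ∃ σ : Equiv.Perm α, g ∘ σ = f := by
  classical
  have e : ∀ b, {x // f x = b} ≃ {x // g x = b} := by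
    intro b
    apply Fintype.equivOfCardEq
    have := h b
    simpa [cont, Fintype.card_subtype] using this
  refine ⟨(Equiv.sigmaFiberEquiv f).symm.trans
    ((Equiv.sigmaCongrRight e).trans (Equiv.sigmaFiberEquiv g)), ?_⟩
  funext x
  simp only [Function.comp_apply, Equiv.trans_apply]
  have h1 : (Equiv.sigmaFiberEquiv f).symm x = ⟨f x, ⟨x, rfl⟩⟩ := rfl
  rw [h1]
  exact (e (f x) ⟨x, rfl⟩).2

lemma cont_card_mul (f : α → β) :
    (univ.filter (fun g : α → β => ∀ b, cont g b = cont f b)).card * ∏ b, (cont f b)! =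
      (Fintype.card α)! := by
  classical
  have key : ∀ g ∈ univ.filter (fun g : α → β => ∀ b, cont g b = cont f b),
      (univ.filter (fun σ : Equiv.Perm α => f ∘ σ = g)).card = ∏ b, (cont f b)! := by
    intro g hg
    rw [mem_filter] at hg
    obtain ⟨σ₀, hσ₀⟩ := exists_perm_comp g f hg.2
    have hiff : ∀ τ : Equiv.Perm α, f ∘ ⇑(τ * σ₀) = g ↔ f ∘ ⇑τ = f := by
      intro τ
      constructor
      · intro h
        funext x
        have := congrFun h (σ₀.symm x)
        simpa [← hσ₀] using this
      · intro h
        funext x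
        have := congrFun h (σ₀ x)
        simpa [← hσ₀] using this
    calc (univ.filter (fun σ : Equiv.Perm α => f ∘ σ = g)).card
        = Fintype.card {σ : Equiv.Perm α // f ∘ σ = g} := (Fintype.card_subtype _).symm
      _ = Fintype.card {σ : Equiv.Perm α // f ∘ σ = f} := by
          refine Fintype.card_congr (Equiv.subtypeEquiv (Equiv.mulRight σ₀⁻¹) fun τ => ?_)
          simp only [Equiv.coe_mulRight]
          have h4 := hiff (τ * σ₀⁻¹)
          simp only [inv_mul_cancel_right] at h4
          exact h4
      _ = ∏ b, (Fintype.card {a // f a = b})! := DomMulAct.stabilizer_card f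
      _ = ∏ b, (cont f b)! := by
          refine Finset.prod_congr rfl fun b _ => ?_
          rw [Fintype.card_subtype]; rfl
  have := Finset.card_eq_sum_card_fiberwise
    (f := fun σ : Equiv.Perm α => f ∘ σ)
    (s := univ) (t := univ.filter (fun g : α → β => ∀ b, cont g b = cont f b))
    (fun σ _ => by simp [cont_comp_perm])
  rw [Finset.card_univ, Fintype.card_perm] at this
  calc (univ.filter (fun g : α → β => ∀ b, cont g b = cont f b)).card * ∏ b, (cont f b)!
      = ∑ _g ∈ univ.filter (fun g : α → β => ∀ b, cont g b = cont f b),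
          ∏ b, (cont f b)! := by rw [Finset.sum_const, smul_eq_mul]
    _ = ∑ g ∈ univ.filter (fun g : α → β => ∀ b, cont g b = cont f b),
          (univ.filter (fun σ : Equiv.Perm α => f ∘ σ = g)).card :=
        (Finset.sum_congr rfl key).symm
    _ = (Fintype.card α)! := this.symm

lemma exists_cont (c : β → ℕ) (h : ∑ b, c b = Fintype.card α) :
    ∃ f : α → β, ∀ b, cont f b = c b := by
  classical
  have hcard : Fintype.card (Σ b, Fin (c b)) = Fintype.card α := by
    simp [Fintype.card_sigma, h]
  obtain ⟨e⟩ : Nonempty (α ≃ Σ b, Fin (c b)) := ⟨(Fintype.equivOfCardEq hcard.symm)⟩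
  refine ⟨fun x => (e x).1, fun b => ?_⟩
  have h1 : cont (fun x => (e x).1) b = Fintype.card {x : α // (e x).1 = b} := by
    rw [Fintype.card_subtype]; rfl
  have h2 : Fintype.card {x : α // (e x).1 = b} =
      Fintype.card {p : Σ b', Fin (c b') // p.1 = b} :=
    Fintype.card_congr (Equiv.subtypeEquiv e (fun x => Iff.rfl))
  rw [h1, h2]
  have hb : Function.Bijective (fun v : Fin (c b) =>
      (⟨⟨b, v⟩, rfl⟩ : {p : Σ b', Fin (c b') // p.1 = b})) := by
    constructor
    · intro v w hvw
      have h3 := congrArg Subtype.val hvw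
      exact eq_of_heq (Sigma.mk.inj_iff.mp h3).2
    · rintro ⟨⟨b', v⟩, hp⟩
      subst hp
      exact ⟨v, rfl⟩
  rw [← Fintype.card_of_bijective hb, Fintype.card_fin]

end ContDef

section ToL
variable {n k : ℕ} [NeZero n]

def rotAct (g : ZMod n) (f : ZMod n → Fin k) : ZMod n → Fin k := fun x => f (x + g)

lemma cont_rotAct (g : ZMod n) (f : ZMod n → Fin k) (i : Fin k) :
    cont (rotAct g f) i = cont f i := by
  unfold cont rotAct
  apply Finset.card_nbij (fun x => x + g)
  · intro x hx; simp_all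
  · intro x hx y hy h; simpa using h
  · intro y hy; exact ⟨y - g, by simp_all, by simp⟩

def toL (f : ZMod n → Fin k) : List ℕ := List.ofFn (fun i : Fin n => (f (i.val : ZMod n)).val)

lemma length_toL (f : ZMod n → Fin k) : (toL f).length = n := by simp [toL]

lemma toL_ne_nil (f : ZMod n → Fin k) : toL f ≠ [] := by
  intro h
  have := congrArg List.length h
  rw [length_toL] at this
  exact (NeZero.ne n) this

lemma toL_injective : Function.Injective (toL (n := n) (k := k)) := by
  intro f g h
  funext x
  have hx : x = ((x.val : ℕ) : ZMod n) := by simp [ZMod.natCast_val, ZMod.cast_id]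
  have hlt : x.val < n := ZMod.val_lt x
  have h1 : x.val < (toL f).length := by simp [length_toL, hlt]
  have := List.getElem_of_eq h h1
  simp only [toL, List.getElem_ofFn] at this
  rw [hx]
  exact Fin.val_injective (by simpa using this)

lemma count_ofFn {m : ℕ} (g : Fin m → ℕ) (a : ℕ) :
    (List.ofFn g).count a = (univ.filter (fun i => g i = a)).card := by
  rw [List.ofFn_eq_map, List.count_eq_countP, List.countP_map,
    List.countP_eq_length_filter]
  rw [← List.toFinset_card_of_nodup ((List.nodup_finRange m).filter _)]
  congr 1
  ext i
  simp [Function.comp, List.mem_filter]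

lemma count_toL (f : ZMod n → Fin k) (i : Fin k) : (toL f).count i.val = cont f i := by
  rw [toL, count_ofFn]
  unfold cont
  apply Finset.card_nbij (fun x : Fin n => ((x.val : ℕ) : ZMod n))
  · intro x hx
    simp only [Finset.mem_coe, mem_filter, mem_univ, true_and] at hx ⊢
    exact Fin.val_injective hx
  · intro x hx y hy h
    have h' : ((x.val : ℕ) : ZMod n) = ((y.val : ℕ) : ZMod n) := h
    have h2 : ((x.val : ℕ) : ZMod n).val = ((y.val : ℕ) : ZMod n).val := by rw [h']
    rw [ZMod.val_cast_of_lt x.isLt, ZMod.val_cast_of_lt y.isLt] at h2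
    exact Fin.val_injective h2
  · intro y hy
    simp only [Set.mem_image, Finset.coe_filter, Set.mem_setOf_eq, mem_univ, true_and] at hy ⊢
    refine ⟨⟨y.val, ZMod.val_lt y⟩, ?_, ?_⟩
    · have : ((y.val : ℕ) : ZMod n) = y := by simp [ZMod.natCast_val, ZMod.cast_id]
      rw [show ((⟨y.val, ZMod.val_lt y⟩ : Fin n).val : ZMod n) = y from this]
      exact congrArg Fin.val hy
    · simp [ZMod.natCast_val, ZMod.cast_id]

lemma mem_toL {f : ZMod n → Fin k} {a : ℕ} (ha : a ∈ toL f) : a < k := by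
  rw [toL, List.mem_ofFn] at ha
  obtain ⟨i, rfl⟩ := ha
  exact (f _).isLt

lemma toL_rotAct (g : ZMod n) (f : ZMod n → Fin k) :
    toL (rotAct g f) = (toL f).rotate g.val := by
  apply List.ext_getElem
  · simp [length_toL]
  · intro i h1 h2
    have hlen : (toL f).length = n := length_toL f
    have hi : i < n := by simpa [length_toL] using h1
    rw [List.getElem_rotate]
    simp only [toL, List.getElem_ofFn, rotAct, List.length_ofFn]
    congr 1
    push_cast [ZMod.natCast_mod]
    rw [ZMod.natCast_val, ZMod.cast_id]

lemma rotate_toL (t : ℕ) (f : ZMod n → Fin k) :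
    (toL f).rotate t = toL (rotAct (t : ZMod n) f) := by
  rw [toL_rotAct, ZMod.val_natCast]
  have h : t % n = t % (toL f).length := by rw [length_toL]
  rw [h, List.rotate_mod]

def fromL (w : List ℕ) (hlen : w.length = n) (hk : ∀ a ∈ w, a < k) : ZMod n → Fin k :=
  fun x => ⟨w.get ⟨x.val, hlen ▸ ZMod.val_lt x⟩, hk _ (w.get_mem _)⟩

lemma toL_fromL (w : List ℕ) (hlen : w.length = n) (hk : ∀ a ∈ w, a < k) :
    toL (fromL w hlen hk) = w := by
  apply List.ext_getElem
  · simp [length_toL, hlen]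
  · intro i h1 h2
    have hi : i < n := by simpa [length_toL] using h1
    simp only [toL, List.getElem_ofFn, fromL]
    simp only [List.get_eq_getElem]
    congr 1
    exact ZMod.val_cast_of_lt hi

end ToL

section Orbits
variable (n k : ℕ) [NeZero n] (c : Fin k → ℕ)

def Wd : Type := {f : ZMod n → Fin k // ∀ i, cont f i = c i}

instance : Fintype (Wd n k c) := by unfold Wd; infer_instance
instance : DecidableEq (Wd n k c) := by unfold Wd; infer_instance

instance : AddAction (ZMod n) (Wd n k c) where
  vadd g f := ⟨rotAct g f.1, fun i => (cont_rotAct g f.1 i).trans (f.2 i)⟩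
  zero_vadd f := Subtype.ext (funext fun x =>
    show f.1 (x + 0) = f.1 x from by rw [add_zero])
  add_vadd g h f := Subtype.ext (funext fun x =>
    show f.1 (x + (g + h)) = f.1 (x + g + h) from by rw [add_assoc])

lemma vadd_def (g : ZMod n) (f : Wd n k c) : (g +ᵥ f).1 = rotAct g f.1 := rfl

variable {n k c}

lemma orbit_iff_rotate (f f' : Wd n k c) :
    (AddAction.orbitRel (ZMod n) (Wd n k c)).r f f' ↔ ∃ t : ℕ, toL f.1 = (toL f'.1).rotate t := by
  constructor
  · intro h
    obtain ⟨g, hg⟩ := h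
    refine ⟨g.val, ?_⟩
    rw [← hg, vadd_def, toL_rotAct]
  · rintro ⟨t, ht⟩
    refine ⟨(t : ZMod n), ?_⟩
    apply Subtype.ext
    apply toL_injective
    rw [vadd_def, ← rotate_toL, ← ht]

/-- The necklace set. -/
def NSet (k : ℕ) (c : Fin k → ℕ) : Set (List ℕ) :=
  {w : List ℕ | (∀ a ∈ w, a < k) ∧ (∀ i : Fin k, w.count i.val = c i) ∧ IsNecklace w}

lemma length_of_mem_NSet {k : ℕ} {c : Fin k → ℕ} {w : List ℕ} (hw : w ∈ NSet k c) :
    w.length = ∑ i, c i := by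
  obtain ⟨h1, h2, _⟩ := hw
  have hms : ∑ a ∈ w.toFinset, w.count a = w.length := by
    simpa using Multiset.toFinset_sum_count_eq (s := (w : Multiset ℕ))
  have hsub : w.toFinset ⊆ Finset.range k := fun a ha =>
    Finset.mem_range.mpr (h1 a (List.mem_toFinset.mp ha))
  have h4 : ∑ a ∈ Finset.range k, w.count a = ∑ a ∈ w.toFinset, w.count a :=
    (Finset.sum_subset hsub (fun a _ ha =>
      List.count_eq_zero_of_not_mem (fun hm => ha (List.mem_toFinset.mpr hm)))).symm
  have h5 : ∑ i : Fin k, c i = ∑ a ∈ Finset.range k, w.count a := by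
    rw [← Fin.sum_univ_eq_sum_range (fun a => w.count a) k]
    exact Finset.sum_congr rfl (fun i _ => (h2 i).symm)
  rw [h5, h4, hms]

noncomputable def orbitNecklaceEquiv (hn : ∑ i, c i = n) :
    Quotient (AddAction.orbitRel (ZMod n) (Wd n k c)) ≃ NSet k c := by
  letI := AddAction.orbitRel (ZMod n) (Wd n k c)
  refine Equiv.ofBijective (fun q => ⟨minRot (toL q.out.1), ?_, ?_, isNecklace_minRot _⟩) ⟨?_, ?_⟩
  · intro a ha
    exact mem_toL (mem_minRot (toL_ne_nil _) ha)
  · intro i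
    rw [count_minRot (toL_ne_nil _), count_toL]
    exact q.out.2 i
  · intro q1 q2 h
    have h' := congrArg Subtype.val h
    simp only at h'
    -- minRot equal ⇒ rotations of each other
    obtain ⟨a1, ha1, he1⟩ := minRot_mem (toL_ne_nil q1.out.1)
    obtain ⟨a2, ha2, he2⟩ := minRot_mem (toL_ne_nil q2.out.1)
    rw [he1, he2] at h'
    have hlen2 : (toL q2.out.1).length = n := length_toL _
    have ha2' : a2 < n := by rwa [hlen2] at ha2
    have h3 : toL q2.out.1 = (toL q1.out.1).rotate (a1 + (n - a2)) := by
      have e1 : ((toL q1.out.1).rotate a1).rotate (n - a2)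
          = ((toL q2.out.1).rotate a2).rotate (n - a2) := by rw [h']
      rw [List.rotate_rotate, List.rotate_rotate] at e1
      rw [show a2 + (n - a2) = n from by omega] at e1
      have e2 : (toL q2.out.1).rotate n = toL q2.out.1 := by
        rw [← List.rotate_mod, hlen2, Nat.mod_self, List.rotate_zero]
      rw [e2] at e1
      exact e1.symm
    have hrel := (orbit_iff_rotate q2.out q1.out).mpr ⟨_, h3⟩
    calc q1 = ⟦q1.out⟧ := q1.out_eq.symm
      _ = ⟦q2.out⟧ := Quotient.sound (Setoid.symm hrel)
      _ = q2 := q2.out_eq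
  · rintro ⟨w, hw1, hw2, hw3⟩
    have hlen : w.length = n := by rw [length_of_mem_NSet ⟨hw1, hw2, hw3⟩, hn]
    set f₀ : ZMod n → Fin k := fromL w hlen hw1 with hf₀
    have hcont : ∀ i, cont f₀ i = c i := by
      intro i
      rw [← count_toL, toL_fromL]
      exact hw2 i
    set F : Wd n k c := ⟨f₀, hcont⟩ with hF
    refine ⟨⟦F⟧, ?_⟩
    apply Subtype.ext
    simp only
    have hrel : (AddAction.orbitRel (ZMod n) (Wd n k c)).r (⟦F⟧ : Quotient _).out F :=
      Quotient.mk_out F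
    obtain ⟨t, ht⟩ := (orbit_iff_rotate _ _).mp hrel
    rw [ht, toL_fromL, minRot_rotate]
    exact minRot_eq_self hw3

end Orbits

section Bezout
variable {n : ℕ} [NeZero n]

lemma mem_addSubgroup_gcd (H : AddSubgroup (ZMod n)) (g : ZMod n) :
    g ∈ H ↔ ((Nat.gcd n g.val : ℕ) : ZMod n) ∈ H := by
  have hgval : ((g.val : ℕ) : ZMod n) = g := by simp [ZMod.natCast_val, ZMod.cast_id]
  constructor
  · intro hg
    have hb := Nat.gcd_eq_gcd_ab n g.val
    have hcast : ((Nat.gcd n g.val : ℕ) : ZMod n) = (Nat.gcdB n g.val : ZMod n) * g := by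
      have : ((Nat.gcd n g.val : ℤ) : ZMod n)
          = ((n * Nat.gcdA n g.val + g.val * Nat.gcdB n g.val : ℤ) : ZMod n) := by
        exact_mod_cast congrArg (fun z : ℤ => (z : ZMod n)) hb
      push_cast at this
      rw [ZMod.natCast_self, zero_mul, zero_add, hgval] at this
      exact this.trans (mul_comm _ _)
    rw [hcast, ← zsmul_eq_mul]
    exact AddSubgroup.zsmul_mem H hg _
  · intro hd
    have hdvd : Nat.gcd n g.val ∣ g.val := Nat.gcd_dvd_right n g.val
    have hgeq : g = (g.val / Nat.gcd n g.val) • ((Nat.gcd n g.val : ℕ) : ZMod n) := by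
      rw [nsmul_eq_mul, ← Nat.cast_mul, Nat.div_mul_cancel hdvd, hgval]
    rw [hgeq]
    exact AddSubgroup.nsmul_mem H hd _
end Bezout

section FixCount
variable {n k d : ℕ} [NeZero n] [NeZero d] (hdn : d ∣ n)

lemma castHom_apply' (x : ZMod n) : ZMod.castHom hdn (ZMod d) x = (x.val : ZMod d) := by
  simp [ZMod.natCast_val]

lemma castHom_val (x : ZMod n) : (ZMod.castHom hdn (ZMod d) x).val = x.val % d := by
  rw [castHom_apply', ZMod.val_natCast]

lemma card_castHom_fiber (y : ZMod d) :
    (univ.filter (fun x : ZMod n => ZMod.castHom hdn (ZMod d) x = y)).card = n / d := by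
  have hd0 : 0 < d := Nat.pos_of_ne_zero (NeZero.ne d)
  have hn0 : 0 < n := Nat.pos_of_ne_zero (NeZero.ne n)
  have hmul : d * (n / d) = n := Nat.mul_div_cancel' hdn
  have key : ∀ j : Fin (n / d), y.val + d * j.val < n := by
    intro j
    have h1 : y.val < d := ZMod.val_lt y
    have h2 : j.val + 1 ≤ n / d := j.isLt
    have h3 : d * (j.val + 1) ≤ d * (n / d) := Nat.mul_le_mul_left d h2
    have h4 : d * (j.val + 1) = d * j.val + d := by ring
    omega
  rw [← Finset.card_fin (n / d)]
  symm
  apply Finset.card_bij (fun (j : Fin (n / d)) _ => ((y.val + d * j.val : ℕ) : ZMod n))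
  · intro j _
    simp only [mem_filter, mem_univ, true_and, map_natCast]
    push_cast
    simp [ZMod.natCast_self, ZMod.natCast_val, ZMod.cast_id]
  · intro j1 _ j2 _ h
    have h1 := congrArg ZMod.val h
    rw [ZMod.val_cast_of_lt (key j1), ZMod.val_cast_of_lt (key j2)] at h1
    have := Nat.eq_of_mul_eq_mul_left (Nat.pos_of_ne_zero (NeZero.ne d)) (by omega : d * j1.val = d * j2.val)
    exact Fin.ext this
  · intro x hx
    rw [mem_filter] at hx
    have hval : x.val % d = y.val := by
      have := congrArg ZMod.val hx.2
      rwa [castHom_val] at this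
    refine ⟨⟨x.val / d, Nat.div_lt_div_of_lt_of_dvd hdn (ZMod.val_lt x)⟩, mem_univ _, ?_⟩
    simp only
    have hmd := Nat.mod_add_div x.val d
    rw [show y.val + d * (x.val / d) = x.val by omega]
    simp [ZMod.natCast_val, ZMod.cast_id]
end FixCount

section FixCount2
variable {n k d : ℕ} [NeZero n] [NeZero d] (hdn : d ∣ n)

lemma cont_comp_castHom (h : ZMod d → Fin k) (i : Fin k) :
    cont (fun x : ZMod n => h (ZMod.castHom hdn (ZMod d) x)) i = (n / d) * cont h i := by
  classical
  unfold cont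
  rw [Finset.card_eq_sum_card_fiberwise
    (f := fun x : ZMod n => ZMod.castHom hdn (ZMod d) x)
    (t := univ.filter (fun y : ZMod d => h y = i))
    (fun x hx => by simp only [Finset.mem_coe, mem_filter, mem_univ, true_and] at hx ⊢; exact hx)]
  have hterm : ∀ y ∈ univ.filter (fun y : ZMod d => h y = i),
      ((univ.filter (fun x : ZMod n => h (ZMod.castHom hdn (ZMod d) x) = i)).filter
        (fun x => ZMod.castHom hdn (ZMod d) x = y)).card = n / d := by
    intro y hy
    rw [mem_filter] at hy
    rw [Finset.filter_filter, ← card_castHom_fiber hdn y]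
    congr 1
    apply Finset.filter_congr
    intro x _
    constructor
    · exact fun hx => hx.2
    · exact fun hx => ⟨by rw [hx, hy.2], hx⟩
  rw [Finset.sum_congr rfl hterm, Finset.sum_const, smul_eq_mul, mul_comm]

lemma fixed_iff_factors (f : ZMod n → Fin k) :
    rotAct ((d : ℕ) : ZMod n) f = f ↔
      ∃ h : ZMod d → Fin k, f = fun x => h (ZMod.castHom hdn (ZMod d) x) := by
  constructor
  · intro hf
    have hstep : ∀ x : ZMod n, f (x + (d : ZMod n)) = f x := fun x => congrFun hf x
    have hm : ∀ (m : ℕ) (x : ZMod n), f (x + ((m * d : ℕ) : ZMod n)) = f x := by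
      intro m
      induction m with
      | zero => intro x; simp
      | succ p ih =>
        intro x
        have h1 : ((p + 1) * d : ℕ) = p * d + d := by ring
        rw [h1, Nat.cast_add]
        rw [show x + (((p * d : ℕ) : ZMod n) + ((d : ℕ) : ZMod n))
            = (x + ((d : ℕ) : ZMod n)) + ((p * d : ℕ) : ZMod n) by ring]
        rw [ih (x + ((d : ℕ) : ZMod n)), hstep x]
    refine ⟨fun y => f ((y.val : ℕ) : ZMod n), ?_⟩
    funext x
    simp only
    rw [castHom_val hdn x]
    have hx : x = ((x.val % d : ℕ) : ZMod n) + (((x.val / d) * d : ℕ) : ZMod n) := by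
      rw [← Nat.cast_add, Nat.mod_add_div' x.val d]
      simp [ZMod.natCast_val, ZMod.cast_id]
    conv_lhs => rw [hx]
    exact hm (x.val / d) _
  · rintro ⟨h, rfl⟩
    funext x
    unfold rotAct
    simp only
    congr 1
    rw [map_add, map_natCast, ZMod.natCast_self, add_zero]

end FixCount2

lemma card_filter_congr {α : Type*} [Fintype α] {p q : α → Prop}
    {ip : DecidablePred p} {iq : DecidablePred q} (h : ∀ x, p x ↔ q x) :
    (@Finset.filter _ p ip univ).card = (@Finset.filter _ q iq univ).card := by
  have he : @Finset.filter _ p ip univ = @Finset.filter _ q iq univ := by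
    ext x
    rw [@Finset.mem_filter _ _ ip, @Finset.mem_filter _ _ iq]
    exact and_congr_right fun _ => h x
  rw [he]

section FixCount3
variable {n k d : ℕ} [NeZero n] [NeZero d] (hdn : d ∣ n) {c : Fin k → ℕ}
include hdn

lemma card_fixed_d'_aux : True := trivial

lemma card_fixed_d (hc : ∑ i, c i = n) :
    (univ.filter (fun F : Wd n k c => ((d : ℕ) : ZMod n) +ᵥ F = F)).card
      = if ∀ i, (n / d) ∣ c i then d ! / ∏ i, (c i / (n / d))! else 0 := by
  classical
  have hd0 : 0 < d := Nat.pos_of_ne_zero (NeZero.ne d)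
  have hn0 : 0 < n := Nat.pos_of_ne_zero (NeZero.ne n)
  have hnd0 : 0 < n / d := Nat.div_pos (Nat.le_of_dvd hn0 hdn) hd0
  have step1 : (univ.filter (fun F : Wd n k c => ((d : ℕ) : ZMod n) +ᵥ F = F)).card
      = (univ.filter (fun h : ZMod d → Fin k => ∀ i, (n / d) * cont h i = c i)).card := by
    symm
    apply Finset.card_bij (fun (h : ZMod d → Fin k) hh =>
      (⟨fun x => h (ZMod.castHom hdn (ZMod d) x), by
        intro i
        rw [cont_comp_castHom hdn h i]
        rw [mem_filter] at hh
        exact hh.2 i⟩ : Wd n k c))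
    · intro h hh
      refine (@Finset.mem_filter _ _ (fun a => instDecidableEqWd n k c _ a) _ _).mpr ⟨mem_univ _, ?_⟩
      apply Subtype.ext
      exact (fixed_iff_factors hdn _).mpr ⟨h, rfl⟩
    · intro h1 hh1 h2 hh2 heq
      have := congrArg Subtype.val heq
      simp only at this
      funext y
      have hy := congrFun this ((y.val : ℕ) : ZMod n)
      rwa [map_natCast, show ((y.val : ℕ) : ZMod d) = y by
        simp [ZMod.natCast_val, ZMod.cast_id]] at hy
    · intro F hF
      have hF := (@Finset.mem_filter _ _ (fun a => instDecidableEqWd n k c _ a) _ _).mp hF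
      have hfix : rotAct ((d : ℕ) : ZMod n) F.1 = F.1 := congrArg Subtype.val hF.2
      obtain ⟨h, hh⟩ := (fixed_iff_factors hdn _).mp hfix
      refine ⟨h, ?_, ?_⟩
      · simp only [mem_filter, mem_univ, true_and]
        intro i
        rw [← cont_comp_castHom hdn h i, ← hh]
        exact F.2 i
      · exact Subtype.ext hh.symm
  rw [step1]
  by_cases hdvd : ∀ i, (n / d) ∣ c i
  · rw [if_pos hdvd]
    have hcc : ∀ i, (n / d) * (c i / (n / d)) = c i := fun i => Nat.mul_div_cancel' (hdvd i)
    have hfil : (univ.filter (fun h : ZMod d → Fin k => ∀ i, (n / d) * cont h i = c i))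
        = univ.filter (fun h : ZMod d → Fin k => ∀ i, cont h i = c i / (n / d)) := by
      apply Finset.filter_congr
      intro h _
      constructor
      · intro hp i
        have := hp i
        have h2 := hcc i
        exact Nat.eq_of_mul_eq_mul_left hnd0 (by omega)
      · intro hp i
        rw [hp i, hcc i]
    have hsum : ∑ i, c i / (n / d) = d := by
      have h1 : (n / d) * ∑ i, c i / (n / d) = ∑ i, c i := by
        rw [Finset.mul_sum]
        exact Finset.sum_congr rfl fun i _ => hcc i
      rw [hc] at h1
      have h2 : (n / d) * d = n := by
        rw [mul_comm]; exact Nat.mul_div_cancel' hdn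
      exact Nat.eq_of_mul_eq_mul_left hnd0 (h1.trans h2.symm)
    obtain ⟨h₀, hh₀⟩ := exists_cont (α := ZMod d) (fun i => c i / (n / d))
      (by rw [hsum, ZMod.card])
    have key := cont_card_mul h₀
    rw [ZMod.card] at key
    have hfil2 : (univ.filter (fun h : ZMod d → Fin k => ∀ i, cont h i = c i / (n / d)))
        = univ.filter (fun h : ZMod d → Fin k => ∀ i, cont h i = cont h₀ i) := by
      apply Finset.filter_congr
      intro h _
      constructor
      · intro hp i; rw [hp i, hh₀ i]
      · intro hp i; rw [hp i, hh₀ i]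
    rw [hfil, hfil2]
    have hprod : ∏ i, (cont h₀ i)! = ∏ i, (c i / (n / d))! :=
      Finset.prod_congr rfl fun i _ => by rw [hh₀ i]
    rw [hprod] at key
    have hppos : 0 < ∏ i, (c i / (n / d))! :=
      Finset.prod_pos fun i _ => Nat.factorial_pos _
    have goal := (Nat.div_eq_of_eq_mul_left hppos key.symm).symm
    exact (card_filter_congr (fun x => Iff.rfl)).trans goal
  · rw [if_neg hdvd]
    rw [Finset.card_eq_zero, Finset.filter_eq_empty_iff]
    intro h _
    push_neg at hdvd
    obtain ⟨i0, hi0⟩ := hdvd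
    intro hmem
    exact hi0 ⟨cont h i0, (hmem i0).symm⟩

end FixCount3

section Final
variable {n k : ℕ} [NeZero n] {c : Fin k → ℕ}

lemma fixedBy_eq_gcd (c : Fin k → ℕ) (g : ZMod n) :
    AddAction.fixedBy (Wd n k c) g
      = AddAction.fixedBy (Wd n k c) ((Nat.gcd n g.val : ℕ) : ZMod n) := by
  ext F
  rw [AddAction.mem_fixedBy, AddAction.mem_fixedBy,
    ← AddAction.mem_stabilizer_iff, ← AddAction.mem_stabilizer_iff]
  exact mem_addSubgroup_gcd _ g

lemma natCard_fixedBy_filter (a : ZMod n) :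
    Nat.card (AddAction.fixedBy (Wd n k c) a)
      = (univ.filter (fun F : Wd n k c => a +ᵥ F = F)).card := by
  rw [← Fintype.card_subtype]
  exact Nat.card_eq_fintype_card

lemma natCard_fixedBy (hc : ∑ i, c i = n) {e : ℕ} (he : e ∣ n) :
    Nat.card (AddAction.fixedBy (Wd n k c) ((e : ℕ) : ZMod n))
      = if ∀ i, (n / e) ∣ c i then e ! / ∏ i, (c i / (n / e))! else 0 := by
  have hn0 : 0 < n := Nat.pos_of_ne_zero (NeZero.ne n)
  have he0 : e ≠ 0 := by
    rintro rfl
    exact hn0.ne' (Nat.eq_zero_of_zero_dvd he)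
  letI : NeZero e := ⟨he0⟩
  rw [natCard_fixedBy_filter]
  exact card_fixed_d he hc

end Final

/-- Enumeration formula for necklaces with fixed content. -/
theorem necklace_content_count_formula (k : ℕ) (hk : 2 ≤ k) (c : Fin k → ℕ)
    (hc : ∀ i, 1 ≤ c i) (n : ℕ) (hn : n = ∑ i, c i) :
    n * Nk k c = ∑ j ∈ (Finset.univ.gcd c).divisors,
      Nat.totient j * (Nat.factorial (n / j) / ∏ i : Fin k, Nat.factorial (c i / j)) := by
  classical
  have hkpos : 0 < k := by omega
  have hn0 : 0 < n := by
    rw [hn]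
    exact Finset.sum_pos (fun i _ => hc i) ⟨⟨0, hkpos⟩, Finset.mem_univ _⟩
  letI : NeZero n := ⟨hn0.ne'⟩
  have hsum : ∑ i, c i = n := hn.symm
  set Om := Quotient (AddAction.orbitRel (ZMod n) (Wd n k c)) with hOm
  have h1 : Nk k c = Nat.card Om := by
    have e := orbitNecklaceEquiv (n := n) (c := c) hsum
    have h1a : Nk k c = Nat.card (NSet k c) := (Nat.card_coe_set_eq _).symm
    rw [h1a, hOm]
    exact (Nat.card_congr e).symm
  letI : ∀ a : ZMod n, Fintype (AddAction.fixedBy (Wd n k c) a) := fun a => Fintype.ofFinite _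
  letI : Fintype Om := Fintype.ofFinite _
  have hb := AddAction.sum_card_fixedBy_eq_card_orbits_mul_card_addGroup (ZMod n) (Wd n k c)
  have hb' : ∑ g : ZMod n, Nat.card (AddAction.fixedBy (Wd n k c) g) = Nat.card Om * n := by
    calc ∑ g : ZMod n, Nat.card (AddAction.fixedBy (Wd n k c) g)
        = ∑ g : ZMod n, Fintype.card (AddAction.fixedBy (Wd n k c) g) :=
          Finset.sum_congr rfl fun g _ => Nat.card_eq_fintype_card
      _ = Fintype.card Om * Fintype.card (ZMod n) := hb
      _ = Nat.card Om * n := by rw [ZMod.card, Nat.card_eq_fintype_card]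
  set T : ℕ → ℕ := fun e => if ∀ i, (n / e) ∣ c i then e ! / ∏ i, (c i / (n / e))! else 0 with hT
  have hterm : ∀ g : ZMod n, Nat.card (AddAction.fixedBy (Wd n k c) g) = T (Nat.gcd n g.val) := by
    intro g
    rw [fixedBy_eq_gcd c g]
    exact natCard_fixedBy hsum (Nat.gcd_dvd_left n g.val)
  have h2 : ∑ g : ZMod n, T (Nat.gcd n g.val) = ∑ v ∈ Finset.range n, T (Nat.gcd n v) := by
    refine Finset.sum_nbij' (i := fun g : ZMod n => g.val) (j := fun v : ℕ => (v : ZMod n))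
      ?_ ?_ ?_ ?_ ?_
    · intro g _; exact Finset.mem_range.mpr (ZMod.val_lt g)
    · intro v _; exact Finset.mem_univ _
    · intro g _; simp [ZMod.natCast_val, ZMod.cast_id]
    · intro v hv; exact ZMod.val_cast_of_lt (Finset.mem_range.mp hv)
    · intro g _; rfl
  have h3 : ∑ v ∈ Finset.range n, T (Nat.gcd n v)
      = ∑ e ∈ n.divisors, Nat.totient (n / e) * T e := by
    rw [← Finset.sum_fiberwise_of_maps_to
      (g := fun v => Nat.gcd n v)
      (fun v _ => Nat.mem_divisors.mpr ⟨Nat.gcd_dvd_left n v, hn0.ne'⟩)]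
    apply Finset.sum_congr rfl
    intro e he
    calc ∑ v ∈ (Finset.range n).filter (fun v => Nat.gcd n v = e), T (Nat.gcd n v)
        = ∑ _v ∈ (Finset.range n).filter (fun v => Nat.gcd n v = e), T e :=
          Finset.sum_congr rfl fun v hv => by rw [(Finset.mem_filter.mp hv).2]
      _ = ((Finset.range n).filter (fun v => Nat.gcd n v = e)).card * T e := by
          rw [Finset.sum_const, smul_eq_mul]
      _ = Nat.totient (n / e) * T e := by
          rw [← Nat.totient_div_of_dvd (Nat.mem_divisors.mp he).1]
  have h4 : ∑ e ∈ n.divisors, Nat.totient (n / e) * T e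
      = ∑ j ∈ n.divisors, Nat.totient j * T (n / j) := by
    have hsd := Nat.sum_div_divisors n (fun j => Nat.totient j * T (n / j))
    rw [← hsd]
    apply Finset.sum_congr rfl
    intro e he
    rw [Nat.div_div_self (Nat.mem_divisors.mp he).1 hn0.ne']
  set G := Finset.univ.gcd c with hG
  have hGn : G ∣ n := by
    rw [hn]; exact Finset.dvd_sum fun i _ => Finset.gcd_dvd (Finset.mem_univ i)
  have hG0 : G ≠ 0 := by
    intro h0
    have h0' := Finset.gcd_eq_zero_iff.mp h0 ⟨0, hkpos⟩ (Finset.mem_univ _)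
    have := hc ⟨0, hkpos⟩
    omega
  have hsub : G.divisors ⊆ n.divisors := Nat.divisors_subset_of_dvd hn0.ne' hGn
  have h5 : ∑ j ∈ n.divisors, Nat.totient j * T (n / j)
      = ∑ j ∈ G.divisors, Nat.totient j * T (n / j) := by
    symm
    apply Finset.sum_subset hsub
    intro j hj hnot
    have hjn : j ∣ n := (Nat.mem_divisors.mp hj).1
    have hndvd : ¬ ∀ i, j ∣ c i := by
      intro hall
      exact hnot (Nat.mem_divisors.mpr ⟨Finset.dvd_gcd (fun i _ => hall i), hG0⟩)
    have hTz : T (n / j) = 0 := by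
      simp only [hT]
      rw [Nat.div_div_self hjn hn0.ne']
      exact if_neg hndvd
    rw [hTz, mul_zero]
  have h6 : ∀ j ∈ G.divisors, Nat.totient j * T (n / j)
      = Nat.totient j * ((n / j)! / ∏ i, (c i / j)!) := by
    intro j hj
    have hjG : j ∣ G := (Nat.mem_divisors.mp hj).1
    have hjn : j ∣ n := hjG.trans hGn
    have hji : ∀ i, j ∣ c i := fun i => hjG.trans (Finset.gcd_dvd (Finset.mem_univ i))
    simp only [hT]
    rw [Nat.div_div_self hjn hn0.ne', if_pos hji]
  calc n * Nk k c = Nat.card Om * n := by rw [h1, mul_comm]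
    _ = ∑ g : ZMod n, Nat.card (AddAction.fixedBy (Wd n k c) g) := hb'.symm
    _ = ∑ g : ZMod n, T (Nat.gcd n g.val) := Finset.sum_congr rfl fun g _ => hterm g
    _ = ∑ v ∈ Finset.range n, T (Nat.gcd n v) := h2
    _ = ∑ e ∈ n.divisors, Nat.totient (n / e) * T e := h3
    _ = ∑ j ∈ n.divisors, Nat.totient j * T (n / j) := h4
    _ = ∑ j ∈ G.divisors, Nat.totient j * T (n / j) := h5
    _ = ∑ j ∈ G.divisors, Nat.totient j * ((n / j)! / ∏ i, (c i / j)!) :=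
        Finset.sum_congr rfl h6
end

section
/- Let k ≥ 2 and n_0,…,n_{k−1} ≥ 1. The number of Lyndon words with content (n_0,…,n_{k−1}) over {0,…,k−1} equals (1/n) · Σ_{j | gcd(n_0,…,n_{k−1})} μ(j) · (n/j)! / ((n_0/j)! ⋯ (n_{k−1}/j)!), where n = n_0 + ⋯ + n_{k−1}. -/
namespace LyndonAux

def lpow (u : List ℕ) : ℕ → List ℕ
  | 0 => []
  | m + 1 => u ++ lpow u m

@[simp] theorem lpow_zero (u : List ℕ) : lpow u 0 = [] := rfl
@[simp] theorem lpow_succ (u : List ℕ) (m : ℕ) : lpow u (m+1) = u ++ lpow u m := rfl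
@[simp] theorem lpow_one (u : List ℕ) : lpow u 1 = u := by simp [lpow]

@[simp] theorem length_lpow (u : List ℕ) (m : ℕ) : (lpow u m).length = m * u.length := by
  induction m with
  | zero => simp
  | succ m ih => simp [lpow, ih, Nat.succ_mul, Nat.add_comm]

@[simp] theorem count_lpow (u : List ℕ) (m a : ℕ) : (lpow u m).count a = m * u.count a := by
  induction m with
  | zero => simp
  | succ m ih => simp [lpow, ih, Nat.succ_mul, Nat.add_comm]

theorem mem_lpow {u : List ℕ} {m a : ℕ} (h : a ∈ lpow u m) : a ∈ u := by
  induction m with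
  | zero => simp at h
  | succ m ih => rcases List.mem_append.1 h with h | h; exact h; exact ih h

theorem lpow_add (u : List ℕ) (a b : ℕ) : lpow u (a + b) = lpow u a ++ lpow u b := by
  induction a with
  | zero => simp
  | succ a ih => rw [Nat.succ_add, lpow_succ, lpow_succ, ih, List.append_assoc]

theorem lpow_mul (u : List ℕ) (a b : ℕ) : lpow u (a * b) = lpow (lpow u a) b := by
  induction b with
  | zero => simp
  | succ b ih => rw [Nat.mul_succ, lpow_add, lpow_succ, ← ih, ← lpow_add, ← lpow_add,
      Nat.add_comm]

theorem getD_lpow (u : List ℕ) (m : ℕ) : ∀ j, j < m * u.length →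
    (lpow u m).getD j 0 = u.getD (j % u.length) 0 := by
  induction m with
  | zero => intro j hj; omega
  | succ m ih =>
    intro j hj
    rw [lpow_succ]
    rcases Nat.lt_or_ge j u.length with hl | hl
    · rw [List.getD_append _ _ _ _ hl, Nat.mod_eq_of_lt hl]
    · have hu : 0 < u.length := by
        rcases Nat.eq_zero_or_pos u.length with h | h
        · rw [h, Nat.mul_zero] at hj; omega
        · exact h
      rw [List.getD_append_right _ _ _ _ hl, ih (j - u.length) (by
        have h2 : (m+1)*u.length = m*u.length + u.length := by ring
        omega)]
      congr 1
      conv_rhs => rw [show j = (j - u.length) + u.length by omega]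
      rw [Nat.add_mod_right]

/-- the circular reading function of a word -/
noncomputable def cf (w : List ℕ) (i : ℕ) : ℕ := w.getD (i % w.length) 0

theorem cf_eq_getElem {w : List ℕ} {i : ℕ} (h : i < w.length) : cf w i = w[i] := by
  rw [cf, Nat.mod_eq_of_lt h]; exact List.getD_eq_getElem w 0 h

theorem cf_mod (w : List ℕ) (i : ℕ) : cf w (i % w.length) = cf w i := by
  rw [cf, cf, Nat.mod_mod_of_dvd _ (dvd_refl _)]

theorem eq_of_cf {w v : List ℕ} (hl : w.length = v.length) (h : ∀ i, cf w i = cf v i) : w = v := by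
  apply List.ext_getElem hl
  intro i h1 h2
  rw [← cf_eq_getElem h1, ← cf_eq_getElem h2, h]

theorem cf_lpow (u : List ℕ) {m : ℕ} (hm : 0 < m) (i : ℕ) :
    cf (lpow u m) i = cf u i := by
  rcases Nat.eq_zero_or_pos u.length with h0 | h0
  · have hu : u = [] := List.length_eq_zero_iff.1 h0
    subst hu
    have : lpow ([] : List ℕ) m = [] := List.length_eq_zero_iff.1 (by simp)
    rw [this]
  · rw [cf, cf, length_lpow, getD_lpow u m _ (Nat.mod_lt _ (by positivity)),
      Nat.mod_mod_of_dvd _ (Dvd.intro_left m rfl)]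

theorem cf_add_length (w : List ℕ) (i : ℕ) : cf w (i + w.length) = cf w i := by
  rw [cf, cf, Nat.add_mod_right]

theorem cf_rotate (w : List ℕ) (s i : ℕ) : cf (w.rotate s) i = cf w (i + s) := by
  rcases List.eq_nil_or_concat w with h | h
  · subst h; simp [cf]
  have hn : 0 < w.length := by rcases h with ⟨a, b, rfl⟩; simp
  have hlen : (w.rotate s).length = w.length := List.length_rotate w s
  have h1 : i % w.length < (w.rotate s).length := by rw [hlen]; exact Nat.mod_lt _ hn
  rw [cf, hlen, List.getD_eq_getElem _ 0 h1, List.getElem_rotate w s _ ,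
      cf, List.getD_eq_getElem _ 0 (Nat.mod_lt _ hn)]
  congr 1
  conv_rhs => rw [← Nat.mod_add_mod]

/-- circular period -/
def CircPer (w : List ℕ) (s : ℕ) : Prop := ∀ i, cf w (i + s) = cf w i

theorem circPer_length (w : List ℕ) : CircPer w w.length := fun i => cf_add_length w i

theorem circPer_add {w : List ℕ} {s t : ℕ} (hs : CircPer w s) (ht : CircPer w t) :
    CircPer w (s + t) := fun i => by rw [← Nat.add_assoc, ht (i + s), hs i]

theorem circPer_mul {w : List ℕ} {s : ℕ} (hs : CircPer w s) (a : ℕ) : CircPer w (a * s) := by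
  induction a with
  | zero => intro i; simp
  | succ a ih => have := circPer_add ih hs
                 intro i
                 have h2 := this i
                 rw [show a * s + s = (a+1) * s by ring] at h2
                 exact h2

theorem circPer_gcd {w : List ℕ} {p q : ℕ} (hp : 0 < p) (hq : 0 < q)
    (h1 : CircPer w p) (h2 : CircPer w q) : CircPer w (Nat.gcd p q) := by
  -- Bezout: ∃ a b, b * q = gcd + a * p
  obtain ⟨a, b, hab⟩ : ∃ a b : ℕ, b * q = Nat.gcd p q + a * p := by
    have hd := Nat.gcd_eq_gcd_ab p q
    set x := Nat.gcdA p q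
    set y := Nat.gcdB p q
    set t : ℤ := (x.natAbs : ℤ) + (y.natAbs : ℤ) with htdef
    have ht0 : 0 ≤ t := by positivity
    have hq1 : (1:ℤ) ≤ q := by exact_mod_cast hq
    have hp1 : (1:ℤ) ≤ p := by exact_mod_cast hp
    have hxt : 0 ≤ q * t - x := by
      have h1' : (x : ℤ) ≤ x.natAbs := Int.le_natAbs
      have h2' : (x.natAbs : ℤ) ≤ t := by
        rw [htdef]; exact le_add_of_nonneg_right (Int.natCast_nonneg _)
      nlinarith
    have hyt : 0 ≤ y + p * t := by
      have h1' : -(y:ℤ) ≤ y.natAbs := by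
        have h' : (-y : ℤ) ≤ ((-y).natAbs : ℤ) := Int.le_natAbs
        rwa [Int.natAbs_neg] at h'
      have h2' : (y.natAbs : ℤ) ≤ t := by
        rw [htdef]; exact le_add_of_nonneg_left (Int.natCast_nonneg _)
      nlinarith
    refine ⟨(q * t - x).toNat, (y + p * t).toNat, ?_⟩
    have : ((y + p * t).toNat : ℤ) * q = Nat.gcd p q + ((q * t - x).toNat : ℤ) * p := by
      rw [Int.toNat_of_nonneg hyt, Int.toNat_of_nonneg hxt]
      rw [hd]; ring
    exact_mod_cast this
  intro i
  have e1 : cf w (i + b * q) = cf w i := circPer_mul h2 b i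
  have e2 : cf w (i + (Nat.gcd p q + a * p)) = cf w (i + Nat.gcd p q) := by
    rw [← Nat.add_assoc]; exact circPer_mul h1 a (i + Nat.gcd p q)
  rw [← hab, e1] at e2
  exact e2.symm

theorem circPer_mod {w : List ℕ} {d : ℕ} (hd : 0 < d) (h : CircPer w d) (i : ℕ) :
    cf w i = cf w (i % d) := by
  conv_lhs => rw [show i = i % d + (i / d) * d from (Nat.mod_add_div' i d).symm]
  exact circPer_mul h (i / d) (i % d)

theorem circPer_lpow {u : List ℕ} {m : ℕ} (hm : 0 < m) : CircPer (lpow u m) u.length :=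
  fun i => by rw [cf_lpow u hm, cf_lpow u hm, cf_add_length]

/-- a circular period dividing the length gives a power decomposition -/
theorem eq_lpow_of_circPer {w : List ℕ} {d : ℕ} (hd : 0 < d) (hdvd : d ∣ w.length)
    (h : CircPer w d) : w = lpow (w.take d) (w.length / d) := by
  rcases Nat.eq_zero_or_pos w.length with h0 | h0
  · rw [List.length_eq_zero_iff.1 h0]; simp [lpow_zero, List.length_eq_zero_iff.1 h0]
  have hdn : d ≤ w.length := Nat.le_of_dvd h0 hdvd
  have htl : (w.take d).length = d := by rw [List.length_take]; omega
  have hq : 0 < w.length / d := Nat.div_pos hdn hd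
  apply eq_of_cf
  · rw [length_lpow, htl, Nat.div_mul_cancel hdvd]
  intro i
  rw [cf_lpow _ hq]
  -- cf w i = cf (w.take d) i
  rw [circPer_mod hd h i, cf, cf, htl]
  have hlt : i % d < d := Nat.mod_lt _ hd
  rw [Nat.mod_eq_of_lt (by omega : i % d < w.length),
      List.getD_eq_getElem _ 0 (by omega : i % d < w.length),
      List.getD_eq_getElem _ 0 (by rw [htl]; exact hlt)]
  exact (List.getElem_take ..).symm


/-- aperiodic (primitive) word -/
def Aperiodic (w : List ℕ) : Prop := w ≠ [] ∧ ∀ u m, w = lpow u m → m = 1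

theorem circPer_of_rotate_eq {w : List ℕ} {s : ℕ} (h : w.rotate s = w) : CircPer w s :=
  fun i => by conv_rhs => rw [← h, cf_rotate]

theorem rotate_eq_of_circPer {w : List ℕ} {s : ℕ} (h : CircPer w s) : w.rotate s = w := by
  apply eq_of_cf (List.length_rotate w s)
  intro i
  rw [cf_rotate]
  exact h i

theorem rotate_lpow (u : List ℕ) {m : ℕ} (hm : 0 < m) : (lpow u m).rotate u.length = lpow u m :=
  rotate_eq_of_circPer (circPer_lpow hm)

theorem aperiodic_rotFree {w : List ℕ} (hw : Aperiodic w) {s : ℕ} (hs : 0 < s)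
    (hsn : s < w.length) (h : w.rotate s = w) : False := by
  have hn : 0 < w.length := by omega
  set d := Nat.gcd s w.length with hddef
  have hd : 0 < d := Nat.gcd_pos_of_pos_left _ hs
  have hdvd : d ∣ w.length := Nat.gcd_dvd_right _ _
  have hcp : CircPer w d := circPer_gcd hs hn (circPer_of_rotate_eq h) (circPer_length w)
  have hpow := eq_lpow_of_circPer hd hdvd hcp
  have := hw.2 _ _ hpow
  have hdn : d = w.length := by
    have h2 := Nat.div_mul_cancel hdvd
    rw [this, one_mul] at h2
    exact h2
  have : d ≤ s := Nat.le_of_dvd hs (Nat.gcd_dvd_left _ _)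
  omega

theorem rotFree_aperiodic {w : List ℕ} (hw : w ≠ [])
    (h : ∀ s, 0 < s → s < w.length → w.rotate s ≠ w) : Aperiodic w := by
  refine ⟨hw, fun u m hum => ?_⟩
  have hn : 0 < w.length := List.length_pos_iff.2 hw
  rcases Nat.lt_or_ge m 2 with hm | hm
  · interval_cases m
    · rw [lpow_zero] at hum; exact absurd hum hw
    · rfl
  · exfalso
    have hq : 0 < u.length := by
      rcases Nat.eq_zero_or_pos u.length with h0 | h0
      · rw [hum, length_lpow, h0, Nat.mul_zero] at hn; omega
      · exact h0
    have hql : u.length < w.length := by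
      rw [hum, length_lpow]; nlinarith
    exact h u.length hq hql (by rw [hum]; exact rotate_lpow u (by omega))

theorem aperiodic_rotate_inj {w : List ℕ} (hw : Aperiodic w) {i j : ℕ}
    (hi : i < w.length) (hj : j < w.length) (h : w.rotate i = w.rotate j) : i = j := by
  have hn : 0 < w.length := by omega
  wlog hij : i ≤ j generalizing i j
  · exact (this hj hi h.symm (by omega)).symm
  by_contra hne
  have hd : 0 < j - i := by omega
  have key : w.rotate (j - i) = w := by
    have h1 : (w.rotate i).rotate (w.length - i) = w := by
      rw [List.rotate_rotate, show i + (w.length - i) = w.length by omega, List.rotate_length]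
    have h2 : (w.rotate j).rotate (w.length - i) = w.rotate (j - i) := by
      rw [List.rotate_rotate, ← List.rotate_mod,
          show (j + (w.length - i)) % w.length = (j - i) % w.length by
            conv_lhs => rw [show j + (w.length - i) = (j - i) + w.length by omega]
            rw [Nat.add_mod_right],
          List.rotate_mod]
    rw [← h2, ← h, h1]
  exact aperiodic_rotFree hw hd (by omega) key

theorem aperiodic_rotate {w : List ℕ} (hw : Aperiodic w) (s : ℕ) : Aperiodic (w.rotate s) := by
  have hn : 0 < w.length := List.length_pos_iff.2 hw.1
  apply rotFree_aperiodic (by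
    intro h
    have := List.length_rotate w s
    rw [h] at this
    simp at this; omega)
  intro t ht htl hrot
  rw [List.length_rotate] at htl
  -- (w.rotate s).rotate t = w.rotate s → w.rotate ((s + t) % n) = w.rotate (s % n) → contradiction
  rw [List.rotate_rotate] at hrot
  have h1 : w.rotate ((s + t) % w.length) = w.rotate (s % w.length) := by
    rw [List.rotate_mod, List.rotate_mod]; exact hrot
  have h2 := aperiodic_rotate_inj hw (Nat.mod_lt _ hn) (Nat.mod_lt _ hn) h1
  have h3 : t ≡ 0 [MOD w.length] := by
    apply Nat.ModEq.add_left_cancel' s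
    exact h2
  have h4 : t % w.length = t := Nat.mod_eq_of_lt htl
  have h5 : t % w.length = 0 % w.length := h3
  simp at h5
  omega

/-- the minimal strong period of a word -/
noncomputable def pr (w : List ℕ) : ℕ :=
  sInf {d | 0 < d ∧ d ∣ w.length ∧ w = lpow (w.take d) (w.length / d)}

theorem pr_spec {w : List ℕ} (hw : w ≠ []) :
    0 < pr w ∧ pr w ∣ w.length ∧ w = lpow (w.take (pr w)) (w.length / pr w) := by
  have hn : 0 < w.length := List.length_pos_iff.2 hw
  have hne : w.length ∈ {d | 0 < d ∧ d ∣ w.length ∧ w = lpow (w.take d) (w.length / d)} := by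
    refine ⟨hn, dvd_refl _, ?_⟩
    rw [Nat.div_self hn, List.take_length, lpow_one]
  exact Nat.sInf_mem ⟨_, hne⟩

theorem pr_le {w : List ℕ} {d : ℕ} (hd : 0 < d) (hdvd : d ∣ w.length)
    (h : w = lpow (w.take d) (w.length / d)) : pr w ≤ d :=
  Nat.sInf_le ⟨hd, hdvd, h⟩

theorem pr_eq_of_aperiodic {u : List ℕ} (hu : Aperiodic u) {m : ℕ} (hm : 0 < m) :
    pr (lpow u m) = u.length := by
  set w := lpow u m with hwdef
  have hq : 0 < u.length := List.length_pos_iff.2 hu.1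
  have hlen : w.length = m * u.length := length_lpow u m
  have hn : 0 < w.length := by rw [hlen]; positivity
  have hwne : w ≠ [] := by intro h; rw [h] at hn; simp at hn
  have htake : w.take u.length = u := by
    rw [hwdef, show m = 1 + (m - 1) by omega, lpow_add, lpow_one, List.take_left]
  have hqmem : pr w ≤ u.length := by
    apply pr_le hq (by rw [hlen]; exact dvd_mul_left u.length m)
    rw [htake, hlen, Nat.mul_div_cancel m hq, ← hwdef]
  obtain ⟨hp, hpdvd, hppow⟩ := pr_spec hwne
  set p := pr w
  -- CircPer w p and CircPer w u.length
  have hnp : 0 < w.length / p := Nat.div_pos (Nat.le_of_dvd hn hpdvd) hp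
  have hcp : CircPer w p := by
    conv in w => rw [hppow]
    intro i
    rw [cf_lpow _ hnp, cf_lpow _ hnp]
    have hlt : (w.take p).length = p := by
      rw [List.length_take]
      have := Nat.le_of_dvd hn hpdvd
      omega
    have hca := cf_add_length (w.take p) i
    rw [hlt] at hca
    exact hca
  have hcq : CircPer w u.length := circPer_lpow hm
  set d := Nat.gcd p u.length with hddef
  have hd : 0 < d := Nat.gcd_pos_of_pos_left _ hp
  have hcd : CircPer w d := circPer_gcd hp hq hcp hcq
  -- transfer to u
  have hcu : CircPer u d := by
    intro i
    have h1 : cf u (i + d) = cf w (i + d) := (cf_lpow u hm _).symm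
    have h2 : cf u i = cf w i := (cf_lpow u hm _).symm
    rw [h1, h2]; exact hcd i
  have hupow := eq_lpow_of_circPer hd (Nat.gcd_dvd_right p u.length) hcu
  have := hu.2 _ _ hupow
  have hdu : d = u.length := by
    have h2 := Nat.div_mul_cancel (Nat.gcd_dvd_right p u.length)
    rw [this, one_mul] at h2
    exact h2
  have : d ≤ p := Nat.le_of_dvd hp (Nat.gcd_dvd_left _ _)
  omega

theorem take_pr_aperiodic {w : List ℕ} (hw : w ≠ []) : Aperiodic (w.take (pr w)) := by
  obtain ⟨hp, hpdvd, hppow⟩ := pr_spec hw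
  have hn : 0 < w.length := List.length_pos_iff.2 hw
  have hpn : pr w ≤ w.length := Nat.le_of_dvd hn hpdvd
  have htl : (w.take (pr w)).length = pr w := by rw [List.length_take]; omega
  have hune : w.take (pr w) ≠ [] := by
    intro h; rw [h] at htl; simp at htl; omega
  refine ⟨hune, fun t m' htm => ?_⟩
  by_contra hm'
  have hm0 : m' ≠ 0 := by
    intro h; rw [h, lpow_zero] at htm; exact hune htm
  have hm2 : 2 ≤ m' := by omega
  have htq : 0 < t.length := by
    rcases Nat.eq_zero_or_pos t.length with h0 | h0
    · exfalso; rw [htm] at htl; rw [length_lpow, h0, Nat.mul_zero] at htl; omega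
    · exact h0
  -- w = lpow t (m' * (w.length / pr w))
  have hwt : w = lpow t (m' * (w.length / pr w)) := by
    rw [lpow_mul, ← htm, ← hppow]
  have hM : 0 < m' * (w.length / pr w) := by
    have : 0 < w.length / pr w := Nat.div_pos hpn hp
    positivity
  set M := m' * (w.length / pr w) with hMdef
  have hlenM : w.length = M * t.length := by
    conv_lhs => rw [hwt]
    rw [length_lpow]
  have htdvd : t.length ∣ w.length := ⟨M, by rw [hlenM]; ring⟩
  have httake : w.take t.length = t := by
    conv_lhs => rw [hwt]
    rw [show M = 1 + (M - 1) by omega, lpow_add, lpow_one, List.take_left]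
  have hdivM : w.length / t.length = M := by rw [hlenM, Nat.mul_div_cancel _ htq]
  have hle : pr w ≤ t.length := by
    apply pr_le htq htdvd
    rw [httake, hdivM]
    exact hwt
  -- but t.length = pr w / m' < pr w
  have : pr w = m' * t.length := by rw [← htl, htm, length_lpow]
  nlinarith


theorem lyndon_aperiodic {w : List ℕ} (hw : IsLyndon w) : Aperiodic w := by
  apply rotFree_aperiodic hw.1
  intro s hs hsn h
  have := hw.2 s hs hsn
  rw [h] at this
  exact lt_irrefl _ this

theorem exists_lyndon_rotation {w : List ℕ} (hw : Aperiodic w) :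
    ∃ u i, IsLyndon u ∧ i < w.length ∧ w = u.rotate i := by
  have hn : 0 < w.length := List.length_pos_iff.2 hw.1
  set S : Finset (List ℕ) := (Finset.range w.length).image (fun s => w.rotate s) with hS
  have hSne : S.Nonempty := ⟨w, by
    rw [hS]
    exact Finset.mem_image.2 ⟨0, Finset.mem_range.2 hn, w.rotate_zero⟩⟩
  obtain ⟨i0, hi0, hu⟩ : ∃ s ∈ Finset.range w.length, w.rotate s = S.min' hSne :=
    Finset.mem_image.1 (S.min'_mem hSne)
  set u := S.min' hSne with hudef
  have hulen : u.length = w.length := by rw [← hu, List.length_rotate]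
  have huap : Aperiodic u := by rw [← hu]; exact aperiodic_rotate hw i0
  have hrotmem : ∀ i, u.rotate i ∈ S := by
    intro i
    rw [← hu, List.rotate_rotate, ← List.rotate_mod, hS]
    exact Finset.mem_image.2 ⟨(i0 + i) % w.length, Finset.mem_range.2 (Nat.mod_lt _ hn), rfl⟩
  have hlyndon : IsLyndon u := by
    refine ⟨by intro h; rw [h] at hulen; simp at hulen; omega, fun i hi hiu => ?_⟩
    have hle : u ≤ u.rotate i := S.min'_le _ (hrotmem i)
    rcases lt_or_eq_of_le hle with h | h
    · exact h
    · exfalso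
      rw [hulen] at hiu
      exact aperiodic_rotFree huap hi (by rw [hulen]; exact hiu) h.symm
  have hi0n : i0 < w.length := Finset.mem_range.1 hi0
  rcases Nat.eq_zero_or_pos i0 with h0 | h0
  · refine ⟨u, 0, hlyndon, hn, ?_⟩
    rw [List.rotate_zero, ← hu, h0, List.rotate_zero]
  · refine ⟨u, w.length - i0, hlyndon, by omega, ?_⟩
    rw [← hu, List.rotate_rotate, show i0 + (w.length - i0) = w.length by omega,
      List.rotate_length]

theorem lyndon_rotate_eq {u v : List ℕ} (hu : IsLyndon u) (hv : IsLyndon v) {a : ℕ}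
    (h : u.rotate a = v) : u = v := by
  have hn : 0 < u.length := List.length_pos_iff.2 hu.1
  rcases Nat.eq_zero_or_pos (a % u.length) with h0 | h0
  · rw [← h, ← List.rotate_mod, h0, List.rotate_zero]
  · exfalso
    have hlt : a % u.length < u.length := Nat.mod_lt _ hn
    have h1 : u < v := by
      have := hu.2 (a % u.length) h0 hlt
      rwa [List.rotate_mod, h] at this
    have hvlen : v.length = u.length := by rw [← h, List.length_rotate]
    have h2 : v.rotate (u.length - a % u.length) = u := by
      rw [← h, ← List.rotate_mod u a, List.rotate_rotate,
        show a % u.length + (u.length - a % u.length) = u.length by omega, List.rotate_length]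
    have h3 : v < u := by
      have := hv.2 (u.length - a % u.length) (by omega) (by omega)
      rwa [h2] at this
    exact absurd h1 (not_lt.2 (le_of_lt h3))


open Classical in
/-- words of length `n` over `{0,…,k-1}` -/
noncomputable def wordSet (n k : ℕ) : Finset (List ℕ) :=
  (Finset.univ : Finset (Fin n → Fin k)).image (fun f => (List.ofFn f).map Fin.val)

theorem mem_wordSet {n k : ℕ} {w : List ℕ} :
    w ∈ wordSet n k ↔ (w.length = n ∧ ∀ a ∈ w, a < k) := by
  constructor
  · intro h
    obtain ⟨f, _, rfl⟩ := Finset.mem_image.1 h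
    constructor
    · simp
    · intro a ha
      simp only [List.mem_map, List.mem_ofFn] at ha
      obtain ⟨b, ⟨i, rfl⟩, rfl⟩ := ha
      exact (f i).isLt
  · rintro ⟨rfl, hlt⟩
    apply Finset.mem_image.2
    refine ⟨fun i => ⟨w[i], hlt _ (List.getElem_mem _)⟩, Finset.mem_univ _, ?_⟩
    apply List.ext_getElem (by simp)
    intro i h1 h2
    simp

theorem length_eq_sum_count {k : ℕ} {w : List ℕ} (h : ∀ a ∈ w, a < k) :
    w.length = ∑ i : Fin k, w.count i.val := by
  induction w with
  | nil => simp
  | cons a w ih =>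
    have ha : a < k := h a List.mem_cons_self
    have ih' := ih (fun b hb => h b (List.mem_cons_of_mem a hb))
    simp only [List.length_cons, List.count_cons]
    rw [Finset.sum_add_distrib, ← ih']
    congr 1
    have hiff : ∀ i : Fin k, (a = (i : ℕ)) ↔ (i = ⟨a, ha⟩) := fun i =>
      ⟨fun h => Fin.ext h.symm, fun h => by rw [h]⟩
    simp only [beq_iff_eq]
    rw [Finset.sum_congr rfl (fun i _ => if_congr (hiff i) rfl rfl)]
    simp

open Classical in
/-- words with content `c` -/
noncomputable def contentF (k : ℕ) (c : Fin k → ℕ) : Finset (List ℕ) :=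
  (wordSet (∑ i, c i) k).filter (fun w => ∀ i : Fin k, w.count i.val = c i)

theorem mem_contentF {k : ℕ} {c : Fin k → ℕ} {w : List ℕ} :
    w ∈ contentF k c ↔ ((∀ a ∈ w, a < k) ∧ ∀ i : Fin k, w.count i.val = c i) := by
  classical
  rw [contentF, Finset.mem_filter, mem_wordSet]
  constructor
  · rintro ⟨⟨_, h2⟩, h3⟩; exact ⟨h2, h3⟩
  · rintro ⟨h1, h2⟩
    refine ⟨⟨?_, h1⟩, h2⟩
    rw [length_eq_sum_count h1]
    exact Finset.sum_congr rfl fun i _ => h2 i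

theorem card_contentF_mul (k : ℕ) : ∀ (n : ℕ) (c : Fin k → ℕ), (∑ i, c i) = n →
    (contentF k c).card * ∏ i, (c i).factorial = n.factorial := by
  intro n
  induction n with
  | zero =>
    intro c hc
    have hc0 : ∀ i, c i = 0 := by
      intro i
      have := Finset.sum_eq_zero_iff.1 hc i (Finset.mem_univ i)
      exact this
    have : contentF k c = {[]} := by
      apply Finset.ext
      intro w
      rw [mem_contentF, Finset.mem_singleton]
      constructor
      · rintro ⟨h1, h2⟩
        have : w.length = 0 := by
          rw [length_eq_sum_count h1]
          rw [show (0:ℕ) = ∑ i : Fin k, (0:ℕ) by simp]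
          exact Finset.sum_congr rfl fun i _ => by rw [h2 i, hc0 i]
        exact List.length_eq_zero_iff.1 this
      · rintro rfl
        exact ⟨by simp, fun i => by simp [hc0 i]⟩
    rw [this]
    simp only [Finset.card_singleton, one_mul, Nat.factorial_zero]
    rw [Finset.prod_congr rfl fun i _ => by rw [hc0 i]]
    simp
  | succ n ih =>
    intro c hc
    classical
    have hdecomp : contentF k c =
        (Finset.univ.filter (fun i : Fin k => 0 < c i)).biUnion
          (fun i => (contentF k (Function.update c i (c i - 1))).image
            (fun w => (i : ℕ) :: w)) := by
      apply Finset.ext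
      intro w
      rw [mem_contentF, Finset.mem_biUnion]
      constructor
      · rintro ⟨h1, h2⟩
        have hlen : w.length = n + 1 := by
          rw [length_eq_sum_count h1, ← hc]
          exact Finset.sum_congr rfl fun i _ => h2 i
        obtain ⟨a, w', rfl⟩ : ∃ a w', w = a :: w' := by
          cases w with
          | nil => simp at hlen
          | cons a w' => exact ⟨a, w', rfl⟩
        have ha : a < k := h1 a List.mem_cons_self
        set ia : Fin k := ⟨a, ha⟩
        have hca : 0 < c ia := by
          rw [← h2 ia]
          simp [List.count_cons, ia]
        have hw' : ∀ i : Fin k, w'.count i.val = Function.update c ia (c ia - 1) i := by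
          intro i
          rcases eq_or_ne i ia with heq | hne
          · rw [heq, Function.update_self]
            have hthis := h2 ia
            have hval : (ia : ℕ) = a := rfl
            rw [List.count_cons] at hthis
            simp only [hval] at hthis ⊢
            simp at hthis
            omega
          · have hthis := h2 i
            rw [Function.update_of_ne hne]
            have hia : ¬ (a = i.val) := by
              intro h
              apply hne
              apply Fin.ext
              simp [ia, ← h]
            simp only [List.count_cons] at hthis
            simp [hia] at hthis
            exact hthis
        exact ⟨ia, Finset.mem_filter.2 ⟨Finset.mem_univ _, hca⟩, Finset.mem_image.2
          ⟨w', mem_contentF.2 ⟨fun b hb => h1 b (List.mem_cons_of_mem _ hb), hw'⟩, rfl⟩⟩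
      · rintro ⟨i, hi, hmem⟩
        obtain ⟨w', hw', rfl⟩ := Finset.mem_image.1 hmem
        have hi' : 0 < c i := (Finset.mem_filter.1 hi).2
        obtain ⟨h1, h2⟩ := mem_contentF.1 hw'
        constructor
        · intro a ha
          rcases List.mem_cons.1 ha with rfl | ha
          · exact i.isLt
          · exact h1 a ha
        · intro j
          rcases eq_or_ne j i with rfl | hne
          · have := h2 j
            rw [Function.update_self] at this
            simp [List.count_cons, this]
            omega
          · have := h2 j
            rw [Function.update_of_ne hne] at this
            have hji : ¬ ((i : ℕ) = j.val) := by
              intro h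
              exact hne (Fin.ext h).symm
            simp [List.count_cons, hji, this]
    have hdisj : ∀ i₁ ∈ Finset.univ.filter (fun i : Fin k => 0 < c i),
        ∀ i₂ ∈ Finset.univ.filter (fun i : Fin k => 0 < c i), i₁ ≠ i₂ →
        Disjoint ((contentF k (Function.update c i₁ (c i₁ - 1))).image (fun w => (i₁ : ℕ) :: w))
          ((contentF k (Function.update c i₂ (c i₂ - 1))).image (fun w => (i₂ : ℕ) :: w)) := by
      intro i₁ _ i₂ _ hne
      apply Finset.disjoint_left.2
      intro w hw1 hw2
      obtain ⟨w1, _, rfl⟩ := Finset.mem_image.1 hw1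
      obtain ⟨w2, _, heq⟩ := Finset.mem_image.1 hw2
      apply hne
      apply Fin.ext
      exact (List.cons.injEq _ _ _ _ ▸ heq).1.symm
    rw [hdecomp, Finset.card_biUnion hdisj]
    have hcard : ∀ i : Fin k,
        ((contentF k (Function.update c i (c i - 1))).image (fun w => (i : ℕ) :: w)).card =
        (contentF k (Function.update c i (c i - 1))).card := by
      intro i
      apply Finset.card_image_of_injective
      intro a b hab
      exact (List.cons.injEq _ _ _ _ ▸ hab).2
    rw [Finset.sum_congr rfl (fun i _ => hcard i), Finset.sum_mul]
    have hterm : ∀ i ∈ Finset.univ.filter (fun i : Fin k => 0 < c i),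
        (contentF k (Function.update c i (c i - 1))).card * ∏ j, (c j).factorial =
        n.factorial * c i := by
      intro i hi
      have hci : 0 < c i := (Finset.mem_filter.1 hi).2
      have hsplit : (∑ j, c j) = c i + ∑ j ∈ Finset.univ \ {i}, c j := by
        rw [← Finset.sum_eq_add_sum_sdiff_singleton_of_mem (Finset.mem_univ i)]
      have hsum : (∑ j, Function.update c i (c i - 1) j) = n := by
        rw [Finset.sum_update_of_mem (Finset.mem_univ i)]
        rw [hc] at hsplit
        omega
      have hih := ih (Function.update c i (c i - 1)) hsum
      have hprod : ∏ j, (c j).factorial =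
          (∏ j, (Function.update c i (c i - 1) j).factorial) * c i := by
        have hfac : (c i).factorial = (c i - 1).factorial * c i := by
          conv_lhs => rw [show c i = (c i - 1) + 1 by omega]
          rw [Nat.factorial_succ, show c i - 1 + 1 = c i by omega]
          ring
        have hsame : ∏ j ∈ Finset.univ \ {i}, (Function.update c i (c i - 1) j).factorial =
            ∏ j ∈ Finset.univ \ {i}, (c j).factorial := by
          apply Finset.prod_congr rfl
          intro j hj
          rw [Function.update_of_ne (by
            intro hji
            rw [hji] at hj
            simp at hj)]
        rw [Finset.prod_eq_mul_prod_sdiff_singleton_of_mem (Finset.mem_univ i)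
              (fun j => (c j).factorial),
            Finset.prod_eq_mul_prod_sdiff_singleton_of_mem (Finset.mem_univ i)
              (fun j => (Function.update c i (c i - 1) j).factorial),
            hsame, Function.update_self, hfac]
        ring
      rw [hprod, ← Nat.mul_assoc, hih]
    rw [Finset.sum_congr rfl hterm, ← Finset.mul_sum]
    have : ∑ i ∈ Finset.univ.filter (fun i : Fin k => 0 < c i), c i = n + 1 := by
      rw [Finset.sum_filter_of_ne (fun i _ h => by omega), hc]
    rw [this, Nat.factorial_succ]
    ring


theorem len_of_mem_contentF {k : ℕ} {c : Fin k → ℕ} {w : List ℕ} (h : w ∈ contentF k c) :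
    w.length = ∑ i, c i := by
  obtain ⟨h1, h2⟩ := mem_contentF.1 h
  rw [length_eq_sum_count h1]
  exact Finset.sum_congr rfl fun i _ => h2 i

theorem rotate_mem_contentF {k : ℕ} {c : Fin k → ℕ} {w : List ℕ} (h : w ∈ contentF k c)
    (s : ℕ) : w.rotate s ∈ contentF k c := by
  obtain ⟨h1, h2⟩ := mem_contentF.1 h
  have hp := List.rotate_perm w s
  exact mem_contentF.2 ⟨fun a ha => h1 a (hp.mem_iff.1 ha), fun i => by rw [hp.count_eq]; exact h2 i⟩

open Classical in
noncomputable def LSetF (k : ℕ) (c : Fin k → ℕ) : Finset (List ℕ) :=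
  (contentF k c).filter (fun w => IsLyndon w)

open Classical in
noncomputable def ASetF (k : ℕ) (c : Fin k → ℕ) : Finset (List ℕ) :=
  (contentF k c).filter (fun w => Aperiodic w)

theorem card_ASetF (k : ℕ) (c : Fin k → ℕ) (hn : 0 < ∑ i, c i) :
    (ASetF k c).card = (∑ i, c i) * (LSetF k c).card := by
  classical
  set n := ∑ i, c i with hndef
  have hlenL : ∀ u ∈ LSetF k c, u.length = n := by
    intro u hu
    exact len_of_mem_contentF (Finset.mem_filter.1 hu).1
  have hdecomp : ASetF k c = (Finset.range n).biUnion
      (fun s => (LSetF k c).image (fun u => u.rotate s)) := by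
    apply Finset.ext
    intro w
    rw [ASetF, Finset.mem_filter, Finset.mem_biUnion]
    constructor
    · rintro ⟨hwc, hwa⟩
      obtain ⟨u, i, hul, hilt, hw⟩ := exists_lyndon_rotation hwa
      have hwu : List.Perm w u := by rw [hw]; exact List.rotate_perm u i
      have huc : u ∈ contentF k c := by
        obtain ⟨h1, h2⟩ := mem_contentF.1 hwc
        exact mem_contentF.2 ⟨fun a ha => h1 a (hwu.mem_iff.2 ha),
          fun j => by rw [← hwu.count_eq]; exact h2 j⟩
      have hwlen : w.length = n := len_of_mem_contentF hwc
      refine ⟨i, Finset.mem_range.2 (by omega), Finset.mem_image.2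
        ⟨u, Finset.mem_filter.2 ⟨huc, hul⟩, hw.symm⟩⟩
    · rintro ⟨s, _, hmem⟩
      obtain ⟨u, hu, rfl⟩ := Finset.mem_image.1 hmem
      obtain ⟨huc, hul⟩ := Finset.mem_filter.1 hu
      exact ⟨rotate_mem_contentF huc s, aperiodic_rotate (lyndon_aperiodic hul) s⟩
  have hrotinj : ∀ s < n, ∀ u ∈ LSetF k c, ∀ v ∈ LSetF k c,
      u.rotate s = v.rotate s → u = v := by
    intro s hs u hu v hv h
    have hun : u.length = n := hlenL u hu
    have hvn : v.length = n := hlenL v hv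
    have h2 : u.rotate (s + (n - s)) = v.rotate (s + (n - s)) := by
      rw [← List.rotate_rotate, ← List.rotate_rotate, h]
    rwa [show s + (n - s) = n by omega, ← hun, List.rotate_length, hun, ← hvn,
      List.rotate_length] at h2
  have hdisj : ∀ s ∈ Finset.range n, ∀ t ∈ Finset.range n, s ≠ t →
      Disjoint ((LSetF k c).image (fun u => u.rotate s))
        ((LSetF k c).image (fun u => u.rotate t)) := by
    intro s hs t ht hst
    apply Finset.disjoint_left.2
    intro w hws hwt
    obtain ⟨u, hu, huw⟩ := Finset.mem_image.1 hws
    obtain ⟨v, hv, hvw⟩ := Finset.mem_image.1 hwt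
    have hun : u.length = n := hlenL u hu
    have hvn : v.length = n := hlenL v hv
    have hsn : s < n := Finset.mem_range.1 hs
    have htn : t < n := Finset.mem_range.1 ht
    have hul : IsLyndon u := (Finset.mem_filter.1 hu).2
    have hvl : IsLyndon v := (Finset.mem_filter.1 hv).2
    -- v = u.rotate (s + (n - t))
    have hv2 : u.rotate (s + (n - t)) = v := by
      rw [← List.rotate_rotate, huw, ← hvw, List.rotate_rotate,
        show t + (n - t) = n by omega, ← hvn, List.rotate_length]
    have huv : u = v := lyndon_rotate_eq hul hvl hv2
    apply hst
    rw [huv] at huw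
    rw [← huw] at hvw
    exact (aperiodic_rotate_inj (lyndon_aperiodic hvl) (by omega) (by omega) hvw).symm
  rw [hdecomp, Finset.card_biUnion hdisj]
  rw [Finset.sum_congr rfl (fun s hs => Finset.card_image_of_injOn
      (fun u hu v hv => hrotinj s (Finset.mem_range.1 hs) u hu v hv))]
  simp [Finset.sum_const, hndef]

theorem sum_div_of_dvd {k : ℕ} (c : Fin k → ℕ) {j : ℕ} (hj : 0 < j)
    (hdvd : ∀ i, j ∣ c i) : ∑ i, c i / j = (∑ i, c i) / j := by
  symm
  apply Nat.div_eq_of_eq_mul_left hj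
  rw [Finset.sum_mul]
  exact (Finset.sum_congr rfl fun i _ => (Nat.div_mul_cancel (hdvd i)).symm)

theorem card_contentF_eq_sum (k : ℕ) (c : Fin k → ℕ) (hk : 0 < k) (hc : ∀ i, 1 ≤ c i) :
    (contentF k c).card =
      ∑ j ∈ (Finset.univ.gcd c).divisors, (ASetF k (fun i => c i / j)).card := by
  classical
  set g := Finset.univ.gcd c with hgdef
  set n := ∑ i, c i with hndef
  have hgdvd : ∀ i, g ∣ c i := fun i => Finset.gcd_dvd (Finset.mem_univ i)
  have hg : 0 < g := by
    rcases Nat.eq_zero_or_pos g with h0 | h0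
    · exfalso
      have := Finset.gcd_eq_zero_iff.1 h0 ⟨0, hk⟩ (Finset.mem_univ _)
      have := hc ⟨0, hk⟩
      omega
    · exact h0
  have hgn : g ∣ n := Finset.dvd_sum (fun i _ => hgdvd i)
  have hn : 0 < n := by
    have := hc ⟨0, hk⟩
    calc 0 < c ⟨0, hk⟩ := this
      _ ≤ n := Finset.single_le_sum (fun i _ => Nat.zero_le _) (Finset.mem_univ _)
  have hlenA : ∀ j, 0 < j → (∀ i, j ∣ c i) → ∀ u ∈ ASetF k (fun i => c i / j),
      u.length = n / j := by
    intro j hj hdvd u hu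
    have := len_of_mem_contentF (Finset.mem_filter.1 hu).1
    rw [this, sum_div_of_dvd c hj hdvd]
  have hdecomp : contentF k c = g.divisors.biUnion
      (fun j => (ASetF k (fun i => c i / j)).image (fun u => lpow u j)) := by
    apply Finset.ext
    intro w
    rw [Finset.mem_biUnion]
    constructor
    · intro hwc
      obtain ⟨h1, h2⟩ := mem_contentF.1 hwc
      have hwlen : w.length = n := len_of_mem_contentF hwc
      have hwne : w ≠ [] := by
        intro h; rw [h] at hwlen; simp at hwlen; omega
      obtain ⟨hp, hpdvd, hppow⟩ := pr_spec hwne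
      set p := pr w with hpdef
      set u := w.take p with hudef
      set j := w.length / p with hjdef
      have hjpos : 0 < j := Nat.div_pos (Nat.le_of_dvd (by omega) hpdvd) hp
      have hjcnt : ∀ i : Fin k, c i = j * u.count i.val := by
        intro i
        rw [← h2 i]
        conv_lhs => rw [hppow]
        rw [count_lpow]
      have hjdvd : ∀ i : Fin k, j ∣ c i := fun i => ⟨u.count i.val, hjcnt i⟩
      have hjg : j ∣ g := Finset.dvd_gcd (fun i _ => hjdvd i)
      refine ⟨j, Nat.mem_divisors.2 ⟨hjg, by omega⟩, Finset.mem_image.2 ⟨u, ?_, ?_⟩⟩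
      · apply Finset.mem_filter.2
        refine ⟨mem_contentF.2 ⟨fun a ha => h1 a (List.take_subset _ _ ha), fun i => ?_⟩,
          take_pr_aperiodic hwne⟩
        exact (Nat.div_eq_of_eq_mul_left hjpos (by rw [hjcnt i, Nat.mul_comm])).symm
      · exact hppow.symm
    · rintro ⟨j, hjmem, hmem⟩
      obtain ⟨u, hu, rfl⟩ := Finset.mem_image.1 hmem
      obtain ⟨hjg, _⟩ := Nat.mem_divisors.1 hjmem
      have hjdvd : ∀ i : Fin k, j ∣ c i := fun i => hjg.trans (hgdvd i)
      obtain ⟨h1, h2⟩ := mem_contentF.1 (Finset.mem_filter.1 hu).1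
      apply mem_contentF.2
      refine ⟨fun a ha => h1 a (mem_lpow ha), fun i => ?_⟩
      rw [count_lpow, h2 i, Nat.mul_div_cancel' (hjdvd i)]
  have hdisj : ∀ j ∈ g.divisors, ∀ j' ∈ g.divisors, j ≠ j' →
      Disjoint ((ASetF k (fun i => c i / j)).image (fun u => lpow u j))
        ((ASetF k (fun i => c i / j')).image (fun u => lpow u j')) := by
    intro j hjmem j' hjmem' hne
    apply Finset.disjoint_left.2
    intro w hw hw'
    obtain ⟨u, hu, huw⟩ := Finset.mem_image.1 hw
    obtain ⟨v, hv, hvw⟩ := Finset.mem_image.1 hw'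
    obtain ⟨hjg, _⟩ := Nat.mem_divisors.1 hjmem
    obtain ⟨hjg', _⟩ := Nat.mem_divisors.1 hjmem'
    have hjpos : 0 < j := Nat.pos_of_dvd_of_pos hjg hg
    have hjpos' : 0 < j' := Nat.pos_of_dvd_of_pos hjg' hg
    have hul : u.length = n / j :=
      hlenA j hjpos (fun i => hjg.trans (hgdvd i)) u hu
    have hvl : v.length = n / j' :=
      hlenA j' hjpos' (fun i => hjg'.trans (hgdvd i)) v hv
    have hua : Aperiodic u := (Finset.mem_filter.1 hu).2
    have hva : Aperiodic v := (Finset.mem_filter.1 hv).2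
    have hp1 : pr w = u.length := by rw [← huw]; exact pr_eq_of_aperiodic hua hjpos
    have hp2 : pr w = v.length := by rw [← hvw]; exact pr_eq_of_aperiodic hva hjpos'
    have hjn : j ∣ n := hjg.trans hgn
    have hjn' : j' ∣ n := hjg'.trans hgn
    apply hne
    have hdiv : n / j = n / j' := by rw [← hul, ← hvl, ← hp1, ← hp2]
    have e1 : n / (n / j) = j := Nat.div_div_self hjn (by omega)
    have e2 : n / (n / j') = j' := Nat.div_div_self hjn' (by omega)
    rw [← e1, ← e2, hdiv]
  rw [hdecomp, Finset.card_biUnion hdisj]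
  apply Finset.sum_congr rfl
  intro j hjmem
  apply Finset.card_image_of_injOn
  intro u hu v hv huv
  obtain ⟨hjg, _⟩ := Nat.mem_divisors.1 hjmem
  have hjpos : 0 < j := Nat.pos_of_dvd_of_pos hjg hg
  have hjdvd : ∀ i : Fin k, j ∣ c i := fun i => hjg.trans (hgdvd i)
  have hul : u.length = n / j := hlenA j hjpos hjdvd u hu
  have hvl : v.length = n / j := hlenA j hjpos hjdvd v hv
  have key : ∀ x : List ℕ, (lpow x j).take x.length = x := by
    intro x
    rw [show j = 1 + (j - 1) by omega, lpow_add, lpow_one, List.take_left]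
  have huv' : lpow u j = lpow v j := huv
  have h1 := key u
  rw [huv', hul, ← hvl, key v] at h1
  exact h1.symm


theorem gcd_div_eq {k : ℕ} (c : Fin k → ℕ) {m : ℕ} (hm : m ∣ Finset.univ.gcd c)
    (hmpos : 0 < m) : Finset.univ.gcd (fun i => c i / m) = Finset.univ.gcd c / m := by
  have hmc : ∀ i : Fin k, m ∣ c i := fun i => hm.trans (Finset.gcd_dvd (Finset.mem_univ i))
  have h1 : Finset.univ.gcd c = Finset.univ.gcd (fun i : Fin k => (c i / m) * m) :=
    Finset.gcd_congr rfl (fun i _ => (Nat.div_mul_cancel (hmc i)).symm)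
  rw [Finset.gcd_mul_right] at h1
  have hnorm : normalize m = m := normalize_eq m
  rw [hnorm] at h1
  rw [h1, Nat.mul_div_cancel _ hmpos]

open ArithmeticFunction in
theorem key_formula (k : ℕ) (hk : 2 ≤ k) (c : Fin k → ℕ) (hc : ∀ i, 1 ≤ c i) (n : ℕ)
    (hn : n = ∑ i, c i) :
    (n : ℤ) * ((LSetF k c).card : ℤ) = ∑ j ∈ (Finset.univ.gcd c).divisors,
      moebius j * ((Nat.factorial (n / j) / ∏ i : Fin k, Nat.factorial (c i / j) : ℕ) : ℤ) := by
  classical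
  set g := Finset.univ.gcd c with hgdef
  have hk0 : 0 < k := by omega
  have hgdvd : ∀ i, g ∣ c i := fun i => Finset.gcd_dvd (Finset.mem_univ i)
  have hg : 0 < g := by
    rcases Nat.eq_zero_or_pos g with h0 | h0
    · exfalso
      have h1 := Finset.gcd_eq_zero_iff.1 h0 ⟨0, hk0⟩ (Finset.mem_univ _)
      have h2 := hc ⟨0, hk0⟩
      omega
    · exact h0
  have hsumpos : 0 < ∑ i, c i := by
    calc 0 < c ⟨0, hk0⟩ := hc ⟨0, hk0⟩
      _ ≤ ∑ i, c i := Finset.single_le_sum (fun i _ => Nat.zero_le _) (Finset.mem_univ _)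
  have hnpos : 0 < n := by omega
  have hgn : g ∣ n := by rw [hn]; exact Finset.dvd_sum (fun i _ => hgdvd i)
  have hcont : ∀ j, j ∣ g → 0 < j → ((contentF k (fun i => c i / j)).card : ℤ)
      = ((Nat.factorial (n / j) / ∏ i : Fin k, Nat.factorial (c i / j) : ℕ) : ℤ) := by
    intro j hj hjpos
    have hdvd : ∀ i, j ∣ c i := fun i => hj.trans (hgdvd i)
    have hsum : (∑ i, c i / j) = n / j := by rw [hn]; exact sum_div_of_dvd c hjpos hdvd
    have hmul := card_contentF_mul k (n / j) (fun i => c i / j) hsum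
    have hprodpos : 0 < ∏ i : Fin k, Nat.factorial (c i / j) :=
      Finset.prod_pos fun i _ => Nat.factorial_pos _
    have heq : (contentF k (fun i => c i / j)).card
        = Nat.factorial (n / j) / ∏ i : Fin k, Nat.factorial (c i / j) :=
      (Nat.div_eq_of_eq_mul_left hprodpos hmul.symm).symm
    exact_mod_cast congrArg (Nat.cast : ℕ → ℤ) heq
  set F : ℕ → ℤ := fun d => ((ASetF k (fun i => c i / (g / d))).card : ℤ) with hF
  set G : ℕ → ℤ := fun d => ((contentF k (fun i => c i / (g / d))).card : ℤ) with hG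
  have hclosed : ∀ a b : ℕ, a ∣ b → b ∈ {x : ℕ | x ∣ g} → a ∈ {x : ℕ | x ∣ g} :=
    fun a b hab hb => hab.trans hb
  have hforward : ∀ d > 0, d ∈ {x : ℕ | x ∣ g} → ∑ e ∈ d.divisors, F e = G d := by
    intro d hdpos hdg
    have hdg : d ∣ g := hdg
    have hmdvd : g / d ∣ g := Nat.div_dvd_of_dvd hdg
    have hmpos : 0 < g / d := Nat.div_pos (Nat.le_of_dvd hg hdg) hdpos
    have hc' : ∀ i, 1 ≤ c i / (g / d) :=
      fun i => Nat.div_pos (Nat.le_of_dvd (hc i) (hmdvd.trans (hgdvd i))) hmpos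
    have hgcd' : Finset.univ.gcd (fun i => c i / (g / d)) = d := by
      rw [gcd_div_eq c hmdvd hmpos, ← hgdef, Nat.div_div_self hdg (by omega)]
    have hmain := card_contentF_eq_sum k (fun i => c i / (g / d)) hk0 hc'
    rw [hgcd'] at hmain
    have hreind : ∑ e ∈ d.divisors, F e = ∑ e ∈ d.divisors, F (d / e) :=
      (Nat.sum_div_divisors d F).symm
    have hterm : ∀ e ∈ d.divisors, F (d / e)
        = ((ASetF k (fun i => c i / (g / d) / e)).card : ℤ) := by
      intro e hemem
      obtain ⟨hed, _⟩ := Nat.mem_divisors.1 hemem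
      have hepos : 0 < e := Nat.pos_of_dvd_of_pos hed hdpos
      have hdepos : 0 < d / e := Nat.div_pos (Nat.le_of_dvd hdpos hed) hepos
      have hge : g / (d / e) = (g / d) * e := by
        apply Nat.div_eq_of_eq_mul_left hdepos
        have e1 : (g / d) * d = g := Nat.div_mul_cancel hdg
        have e2 : (d / e) * e = d := Nat.div_mul_cancel hed
        calc g = (g / d) * d := e1.symm
          _ = (g / d) * ((d / e) * e) := by rw [e2]
          _ = ((g / d) * e) * (d / e) := by ring
      have hfun : (fun i : Fin k => c i / (g / (d / e)))
          = (fun i : Fin k => c i / (g / d) / e) := by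
        funext i
        rw [hge, Nat.div_div_eq_div_mul]
      rw [hF]
      simp only []
      rw [hfun]
    rw [hreind, Finset.sum_congr rfl hterm]
    rw [hG]
    simp only []
    exact_mod_cast hmain.symm
  have hinv := (ArithmeticFunction.sum_eq_iff_sum_mul_moebius_eq_on {x : ℕ | x ∣ g}
    hclosed).mp hforward g hg (dvd_refl g)
  simp only [Int.cast_id] at hinv
  rw [Nat.sum_divisorsAntidiagonal (f := fun x y => (moebius x : ℤ) * G y)] at hinv
  have hFg : F g = ((ASetF k c).card : ℤ) := by
    have harg : (fun i : Fin k => c i / (g / g)) = c := by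
      funext i
      rw [Nat.div_self hg, Nat.div_one]
    rw [hF]
    simp only []
    rw [harg]
  have hA : (ASetF k c).card = (∑ i, c i) * (LSetF k c).card := card_ASetF k c hsumpos
  have hGterm : ∀ j ∈ g.divisors, (moebius j : ℤ) * G (g / j)
      = moebius j * ((Nat.factorial (n / j) / ∏ i : Fin k, Nat.factorial (c i / j) : ℕ) : ℤ) := by
    intro j hjmem
    obtain ⟨hjg, _⟩ := Nat.mem_divisors.1 hjmem
    have hjpos : 0 < j := Nat.pos_of_dvd_of_pos hjg hg
    congr 1
    have hgj : g / (g / j) = j := Nat.div_div_self hjg (by omega)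
    rw [hG]
    simp only []
    rw [hgj]
    exact hcont j hjg hjpos
  rw [← Finset.sum_congr rfl hGterm, hinv, hFg]
  rw [hn]
  exact_mod_cast congrArg (Nat.cast : ℕ → ℤ) hA.symm

end LyndonAux


open ArithmeticFunction in
/-- Enumeration formula for Lyndon words with fixed content. -/
theorem lyndon_content_count_formula (k : ℕ) (hk : 2 ≤ k) (c : Fin k → ℕ)
    (hc : ∀ i, 1 ≤ c i) (n : ℕ) (hn : n = ∑ i, c i) :
    (n : ℤ) * Lk k c = ∑ j ∈ (Finset.univ.gcd c).divisors,
      moebius j * ((Nat.factorial (n / j) / ∏ i : Fin k, Nat.factorial (c i / j) : ℕ) : ℤ) := by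
  classical
  have hset : {w : List ℕ | (∀ a ∈ w, a < k) ∧ (∀ i : Fin k, w.count i.val = c i) ∧ IsLyndon w}
      = ↑(LyndonAux.LSetF k c) := by
    ext w
    constructor
    · rintro ⟨h1, h2, h3⟩
      exact Finset.mem_coe.2 (Finset.mem_filter.2 ⟨LyndonAux.mem_contentF.2 ⟨h1, h2⟩, h3⟩)
    · intro hw
      obtain ⟨hcm, hl⟩ := Finset.mem_filter.1 (Finset.mem_coe.1 hw)
      obtain ⟨h1, h2⟩ := LyndonAux.mem_contentF.1 hcm
      exact ⟨h1, h2, hl⟩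
  have hL : Lk k c = (LyndonAux.LSetF k c).card := by
    rw [Lk, hset, Set.ncard_coe_finset]
  rw [hL]
  exact LyndonAux.key_formula k hk c hc n hn
end

section
/- Let n ≥ 2, k ≥ 2, and let w = a_1⋯a_{n−1} be a prenecklace over the alphabet {0,…,k−1}. Let p = lyn(w) be the length of the longest prefix of w that is a Lyndon word, and let b ∈ {0,…,k−1}. Then wb is a prenecklace if and only if a_{n−p} ≤ b. -/
lemma nk_lt_char {x y : List ℕ} (h : x.length = y.length) :
    x < y ↔ ∃ j, j < x.length ∧ (∀ t, t < j → x.getD t 0 = y.getD t 0) ∧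
      x.getD j 0 < y.getD j 0 := by
  induction x generalizing y with
  | nil =>
    have hy : y = [] := List.length_eq_zero_iff.mp h.symm
    subst hy
    simp only [List.length_nil, Nat.not_lt_zero, false_and, exists_false, iff_false]
    exact lt_irrefl _
  | cons a x ih =>
    cases y with
    | nil => simp at h
    | cons b y =>
      simp only [List.length_cons, Nat.add_right_cancel_iff] at h
      constructor
      · intro hlt
        have hlt' : List.Lex (· < ·) (a :: x) (b :: y) := hlt
        cases hlt' with
        | rel hab => exact ⟨0, by simp, fun t ht => by omega, by simpa using hab⟩
        | cons htail =>
          obtain ⟨j, hj, heq, hst⟩ := (ih h).mp htail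
          refine ⟨j + 1, by simpa using Nat.succ_lt_succ hj, fun t ht => ?_, by simpa using hst⟩
          cases t with
          | zero => simp
          | succ t => simpa using heq t (by omega)
      · rintro ⟨j, hj, heq, hst⟩
        cases j with
        | zero =>
          exact List.Lex.rel (by simpa using hst)
        | succ j =>
          have hab : a = b := by simpa using heq 0 (by omega)
          subst hab
          refine List.Lex.cons ?_
          refine (ih h).mpr ⟨j, by simpa using hj, fun t ht => ?_, by simpa using hst⟩
          simpa using heq (t + 1) (by omega)

lemma nk_eq_char {x y : List ℕ} (h : x.length = y.length)
    (he : ∀ t, t < x.length → x.getD t 0 = y.getD t 0) : x = y := by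
  refine List.ext_getElem h fun n h1 h2 => ?_
  have := he n h1
  rwa [List.getD_eq_getElem _ _ h1, List.getD_eq_getElem _ _ h2] at this

lemma nk_lt_of_char {x y : List ℕ} (h : x.length = y.length) {j : ℕ} (hj : j < x.length)
    (he : ∀ t, t < j → x.getD t 0 = y.getD t 0) (hst : x.getD j 0 < y.getD j 0) : x < y :=
  (nk_lt_char h).mpr ⟨j, hj, he, hst⟩

lemma nk_le_getD {x y : List ℕ} (h : x.length = y.length) (hxy : x ≤ y) {j : ℕ}
    (hj : j < x.length) (he : ∀ t, t < j → x.getD t 0 = y.getD t 0) :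
    x.getD j 0 ≤ y.getD j 0 := by
  rcases lt_or_eq_of_le hxy with hlt | heq
  · obtain ⟨j₀, hj₀, he₀, hs₀⟩ := (nk_lt_char h).mp hlt
    rcases lt_trichotomy j j₀ with h1 | rfl | h2
    · exact le_of_eq (he₀ j h1)
    · exact le_of_lt hs₀
    · exact absurd (he j₀ h2) (ne_of_lt hs₀)
  · rw [heq]

-- rotate getD
lemma nk_getD_rotate {z : List ℕ} {i t : ℕ} (ht : t < z.length) :
    (z.rotate i).getD t 0 = z.getD ((t + i) % z.length) 0 := by
  have h1 : t < (z.rotate i).length := by rwa [List.length_rotate]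
  have h2 : (t + i) % z.length < z.length := Nat.mod_lt _ (by omega)
  rw [List.getD_eq_getElem _ _ h1, List.getD_eq_getElem _ _ h2, List.getElem_rotate]

-- F0
lemma nk_F0 {u : List ℕ} (hu : IsLyndon u) {s : ℕ} (hs0 : 0 < s) (hsp : s < u.length) :
    ∃ j, j < u.length ∧ (∀ t, t < j → u.getD t 0 = u.getD ((t + s) % u.length) 0) ∧
      u.getD j 0 < u.getD ((j + s) % u.length) 0 := by
  have hlt := hu.2 s hs0 hsp
  have hlen : u.length = (u.rotate s).length := (List.length_rotate u s).symm
  obtain ⟨j, hj, he, hst⟩ := (nk_lt_char hlen).mp hlt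
  exact ⟨j, hj, fun t ht => by rw [← nk_getD_rotate (by omega)]; exact he t ht,
    by rw [← nk_getD_rotate hj]; exact hst⟩

-- unbordered
lemma nk_unbordered {u : List ℕ} (hu : IsLyndon u) {s : ℕ} (hs0 : 0 < s) (hsp : s < u.length) :
    ¬ ∀ t, t + s < u.length → u.getD t 0 = u.getD (s + t) 0 := by
  intro hb
  set p := u.length with hp
  obtain ⟨j, hj, he, hst⟩ := nk_F0 hu hs0 hsp
  have hjge : p - s ≤ j := by
    by_contra hlt
    have h1 : (j + s) % p = s + j := by
      rw [Nat.mod_eq_of_lt (by omega)]; omega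
    rw [h1] at hst
    exact absurd (hb j (by omega)) (ne_of_lt hst)
  -- D1
  have hD1 : ∀ t, p - s ≤ t → t < j → u.getD t 0 = u.getD (t - (p - s)) 0 := by
    intro t h1 h2
    have := he t h2
    have h3 : (t + s) % p = t - (p - s) := by
      have : t + s - p < p := by omega
      have h4 : t + s = (t - (p - s)) + p := by omega
      rw [h4, Nat.add_mod_right, Nat.mod_eq_of_lt (by omega)]
    rwa [h3] at this
  have hD2 : u.getD j 0 < u.getD (j - (p - s)) 0 := by
    have h3 : (j + s) % p = j - (p - s) := by
      have h4 : j + s = (j - (p - s)) + p := by omega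
      rw [h4, Nat.add_mod_right, Nat.mod_eq_of_lt (by omega)]
    rwa [h3] at hst
  obtain ⟨j', hj', h'e, h's⟩ := nk_F0 hu (s := p - s) (by omega) (by omega)
  set t' := j - (p - s) with ht'
  have ht'lt : t' < s := by omega
  have hkey : (t' + (p - s)) % p = j := by
    have : t' + (p - s) = j := by omega
    rw [this, Nat.mod_eq_of_lt hj]
  rcases lt_trichotomy j' t' with h1 | h1 | h1
  · -- j' < t' : strict at j' but D1 says equal
    have hmod : (j' + (p - s)) % p = j' + (p - s) := by
      rw [Nat.mod_eq_of_lt (by omega)]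
    rw [hmod] at h's
    have : u.getD (j' + (p - s)) 0 = u.getD j' 0 := by
      have := hD1 (j' + (p - s)) (by omega) (by omega)
      simpa using this
    omega
  · subst h1
    rw [hkey] at h's
    omega
  · have := h'e t' h1
    rw [hkey] at this
    omega

-- F1
lemma nk_F1 {u : List ℕ} (hu : IsLyndon u) {s : ℕ} (hs0 : 0 < s) (hsp : s < u.length) :
    ∃ j₀, j₀ + s < u.length ∧ (∀ t, t < j₀ → u.getD t 0 = u.getD (s + t) 0) ∧
      u.getD j₀ 0 < u.getD (s + j₀) 0 := by
  set p := u.length with hp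
  obtain ⟨j, hj, he, hst⟩ := nk_F0 hu hs0 hsp
  have hlt : j + s < p := by
    by_contra hge
    refine nk_unbordered hu hs0 hsp (fun t ht => ?_)
    have := he t (by omega)
    rwa [Nat.mod_eq_of_lt (by omega), Nat.add_comm t s] at this
  refine ⟨j, hlt, fun t ht => ?_, ?_⟩
  · have := he t ht
    rwa [Nat.mod_eq_of_lt (by omega), Nat.add_comm t s] at this
  · rwa [Nat.mod_eq_of_lt (by omega), Nat.add_comm j s] at hst

-- lyn spec
lemma nk_lyn_spec {w : List ℕ} (hw : w ≠ []) :
    0 < lyn w ∧ lyn w ≤ w.length ∧ IsLyndon (w.take (lyn w)) ∧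
      ∀ q, q ≤ w.length → IsLyndon (w.take q) → q ≤ lyn w := by
  have hbdd : BddAbove {p | p ≤ w.length ∧ IsLyndon (w.take p)} :=
    ⟨w.length, fun x hx => hx.1⟩
  have hwl : 0 < w.length := List.length_pos_iff.mpr hw
  have h1 : 1 ∈ {p | p ≤ w.length ∧ IsLyndon (w.take p)} := by
    refine ⟨hwl, ?_, fun i hi0 hi1 => ?_⟩
    · intro hnil
      have := congrArg List.length hnil
      simp [Nat.min_eq_left hwl] at this
    · have : (w.take 1).length = 1 := by simp [Nat.min_eq_left hwl]
      omega
  have hmem := Nat.sSup_mem ⟨1, h1⟩ hbdd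
  have hub := fun q hq hl => le_csSup hbdd (show q ∈ _ from ⟨hq, hl⟩)
  exact ⟨le_csSup hbdd h1, hmem.1, hmem.2, hub⟩

lemma nk_lyn_ext {u z : List ℕ} (hu : IsLyndon u) {j : ℕ} (hzlen : z.length = j + 1)
    (hz : ∀ t, t < j → z.getD t 0 = u.getD (t % u.length) 0)
    (hzj : u.getD (j % u.length) 0 < z.getD j 0) : IsLyndon z := by
  set p := u.length with hp
  have hp0 : 0 < p := List.length_pos_iff.mpr hu.1
  refine ⟨by intro h; rw [h] at hzlen; simp at hzlen, fun i hi0 hij => ?_⟩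
  rw [hzlen] at hij
  -- master claim
  have master : ∃ t', t' ≤ j - i ∧ (∀ t, t < t' → z.getD t 0 = z.getD (i + t) 0) ∧
      z.getD t' 0 < z.getD (i + t') 0 := by
    set s := i % p with hs
    by_cases hs0 : s = 0
    · -- i multiple of p
      have hdvd : p ∣ i := Nat.dvd_of_mod_eq_zero (hs.symm.trans hs0)
      refine ⟨j - i, le_refl _, fun t ht => ?_, ?_⟩
      · have h1 : z.getD t 0 = u.getD (t % p) 0 := hz t (by omega)
        have h2 : z.getD (i + t) 0 = u.getD ((i + t) % p) 0 := hz (i + t) (by omega)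
        have h3 : (i + t) % p = t % p := by
          obtain ⟨c, rfl⟩ := hdvd
          rw [Nat.add_comm, Nat.add_mul_mod_self_left]
        rw [h1, h2, h3]
      · have h1 : z.getD (j - i) 0 = u.getD ((j - i) % p) 0 := hz (j - i) (by omega)
        have h2 : i + (j - i) = j := by omega
        have h3 : (j - i) % p = j % p := by
          obtain ⟨c, rfl⟩ := hdvd
          have : j - p * c + p * c = j := by omega
          calc (j - p * c) % p = (j - p * c + p * c) % p := by
                rw [Nat.add_mul_mod_self_left]
            _ = j % p := by rw [this]
        rw [h1, h2, h3]
        exact hzj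
    · have hsp : s < p := Nat.mod_lt _ hp0
      have hs0' : 0 < s := by omega
      obtain ⟨j₀, hj₀p, he, hst⟩ := nk_F1 hu hs0' hsp
      have hismod : i % p = s := hs.symm
      have hmodadd : ∀ t, t < p - s → (i + t) % p = s + t := by
        intro t ht
        have h1 : t % p = t := Nat.mod_eq_of_lt (by omega)
        rw [Nat.add_mod, hismod, h1, Nat.mod_eq_of_lt (show s + t < p by omega)]
      have heqpart : ∀ t, t < j₀ → t < j - i → z.getD t 0 = z.getD (i + t) 0 := by
        intro t ht1 ht2
        have h1 : z.getD t 0 = u.getD (t % p) 0 := hz t (by omega)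
        have h2 : z.getD (i + t) 0 = u.getD ((i + t) % p) 0 := hz (i + t) (by omega)
        rw [h1, h2, hmodadd t (by omega), Nat.mod_eq_of_lt (by omega)]
        exact he t ht1
      by_cases hcase : j₀ < j - i
      · refine ⟨j₀, by omega, fun t ht => heqpart t ht (by omega), ?_⟩
        have h1 : z.getD j₀ 0 = u.getD (j₀ % p) 0 := hz j₀ (by omega)
        have h2 : z.getD (i + j₀) 0 = u.getD ((i + j₀) % p) 0 := hz (i + j₀) (by omega)
        rw [h1, h2, hmodadd j₀ (by omega), Nat.mod_eq_of_lt (by omega)]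
        exact hst
      · -- j₀ ≥ j - i
        have hji : j - i ≤ j₀ := by omega
        have hkeymod : (s + (j - i)) % p = j % p := by
          have hdecomp : i % p + p * (i / p) = i := Nat.mod_add_div i p
          have h4 : s + (j - i) + p * (i / p) = j := by omega
          calc (s + (j - i)) % p = (s + (j - i) + p * (i / p)) % p := by
                rw [Nat.add_mul_mod_self_left]
            _ = j % p := by rw [h4]
        refine ⟨j - i, le_refl _, fun t ht => heqpart t (by omega) ht, ?_⟩
        have h1 : z.getD (j - i) 0 = u.getD ((j - i) % p) 0 := hz (j - i) (by omega)
        have h2 : i + (j - i) = j := by omega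
        rw [h1, h2, Nat.mod_eq_of_lt (show j - i < p by omega)]
        rcases eq_or_lt_of_le hji with heq | hlt
        · -- j - i = j₀
          rw [← heq] at hst
          have : u.getD (s + (j - i)) 0 = u.getD (j % p) 0 := by
            rw [← hkeymod, Nat.mod_eq_of_lt (by omega)]
          omega
        · -- j - i < j₀
          have := he (j - i) hlt
          have h5 : u.getD (s + (j - i)) 0 = u.getD (j % p) 0 := by
            rw [← hkeymod, Nat.mod_eq_of_lt (by omega)]
          omega
  obtain ⟨t', ht'le, he', hst'⟩ := master
  have hlen : z.length = (z.rotate i).length := (List.length_rotate z i).symm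
  refine nk_lt_of_char hlen (j := t') (by omega) (fun t ht => ?_) ?_
  · rw [nk_getD_rotate (by omega), Nat.mod_eq_of_lt (show t + i < z.length by omega),
      Nat.add_comm t i]
    exact he' t ht
  · rw [nk_getD_rotate (by omega), Nat.mod_eq_of_lt (show t' + i < z.length by omega),
      Nat.add_comm t' i]
    exact hst'

/-- pointwise preprime property -/
def NkPP (w : List ℕ) : Prop :=
  ∀ i j : ℕ, 0 < i → i + j < w.length →
    (∀ t, t < j → w.getD t 0 = w.getD (i + t) 0) → w.getD j 0 ≤ w.getD (i + j) 0

lemma nk_pp_of_pre {k : ℕ} {w : List ℕ} (h : IsPrenecklace k w) : NkPP w := by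
  obtain ⟨v, hpre, -, hneck⟩ := h
  intro i j hi0 hij heq
  have hlenw : w.length ≤ v.length := List.IsPrefix.length_le hpre
  have hgd : ∀ t, t < w.length → w.getD t 0 = v.getD t 0 := by
    intro t ht
    rw [List.getD_eq_getElem _ _ ht, List.getD_eq_getElem _ _ (by omega), hpre.getElem ht]
  have hlen : v.length = (v.rotate i).length := (List.length_rotate v i).symm
  have key := nk_le_getD hlen (hneck i) (j := j) (by omega) (fun t ht => ?_)
  · rw [nk_getD_rotate (show j < v.length by omega),
      Nat.mod_eq_of_lt (show j + i < v.length by omega), Nat.add_comm j i] at key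
    rw [hgd j (by omega), hgd (i + j) (by omega)]
    exact key
  · rw [nk_getD_rotate (show t < v.length by omega),
      Nat.mod_eq_of_lt (show t + i < v.length by omega), Nat.add_comm t i]
    rw [← hgd t (by omega), ← hgd (i + t) (by omega)]
    exact heq t ht

/-- structure: a pointwise-preprime word is periodic with period lyn -/
lemma nk_struct {w : List ℕ} (hw : w ≠ []) (hpp : NkPP w) :
    ∀ j, j < w.length → w.getD j 0 = w.getD (j % lyn w) 0 := by
  obtain ⟨hp0, hpm, hlyn, hmax⟩ := nk_lyn_spec hw
  set p := lyn w with hpdef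
  intro j
  induction j using Nat.strong_induction_on with
  | _ j ih =>
    intro hj
    by_cases hjp : j < p
    · rw [Nat.mod_eq_of_lt hjp]
    · push_neg at hjp
      by_contra hne
      set r := j % p with hr
      have hrp : r < p := Nat.mod_lt _ hp0
      have hq : p * (j / p) + r = j := Nat.div_add_mod j p
      set q := j - r with hqdef
      have hqm : q = p * (j / p) := by omega
      have hle : w.getD r 0 ≤ w.getD j 0 := by
        have := hpp q r (by omega) (by omega) (fun t ht => ?_)
        · rwa [show q + r = j by omega] at this
        · have h1 := ih (q + t) (by omega) (by omega)
          have h2 : (q + t) % p = t := by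
            rw [hqm, Nat.add_comm, Nat.add_mul_mod_self_left, Nat.mod_eq_of_lt (by omega)]
          rw [h1, h2]
      have hlt : w.getD r 0 < w.getD j 0 := lt_of_le_of_ne hle (by rw [hr]; exact fun h => hne h.symm)
      -- take (j+1) w is Lyndon
      have hup : (w.take p).length = p := by rw [List.length_take]; omega
      have hugd : ∀ t, t < p → (w.take p).getD t 0 = w.getD t 0 := by
        intro t ht
        rw [List.getD_eq_getElem (w.take p) _ (by rw [hup]; omega),
          List.getD_eq_getElem w _ (show t < w.length by omega), List.getElem_take]
      have hzlyn : IsLyndon (w.take (j + 1)) := by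
        refine nk_lyn_ext hlyn (j := j)
          (by rw [List.length_take]; omega) (fun t ht => ?_) ?_
        · rw [hup]
          rw [List.getD_eq_getElem (w.take (j+1)) _ (by rw [List.length_take]; omega),
            List.getElem_take, ← List.getD_eq_getElem _ _ (by omega : t < w.length)]
          rw [hugd (t % p) (Nat.mod_lt _ hp0)]
          exact ih t (by omega) (by omega)
        · rw [hup, hugd (j % p) (Nat.mod_lt _ hp0)]
          rw [List.getD_eq_getElem (w.take (j+1)) _ (by rw [List.length_take]; omega),
            List.getElem_take, ← List.getD_eq_getElem _ _ (by omega : j < w.length)]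
          exact hlt
      have := hmax (j + 1) (by omega) hzlyn
      omega

/-- the periodic power word -/
lemma nk_neck_pow {u : List ℕ} (hu : IsLyndon u) (T : ℕ) :
    IsNecklace ((List.range (T * u.length)).map (fun j => u.getD (j % u.length) 0)) := by
  set p := u.length with hp
  have hp0 : 0 < p := List.length_pos_iff.mpr hu.1
  set v := (List.range (T * p)).map (fun j => u.getD (j % p) 0) with hv
  have hvlen : v.length = T * p := by simp [hv]
  have hvgd : ∀ t, t < T * p → v.getD t 0 = u.getD (t % p) 0 := by
    intro t ht
    rw [List.getD_eq_getElem _ _ (by omega)]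
    simp [hv, List.getElem_map, List.getElem_range]
  intro i
  rcases Nat.eq_zero_or_pos (T * p) with h0 | hTp
  · have : v = [] := List.length_eq_zero_iff.mp (by omega)
    rw [this]
    simp [List.rotate_nil]
  rw [← List.rotate_mod]
  set i' := i % v.length with hi'
  have hi'lt : i' < T * p := by rw [hi', hvlen]; exact Nat.mod_lt _ (by omega)
  have hrotgd : ∀ t, t < T * p → (v.rotate i').getD t 0 = u.getD ((t + i') % p) 0 := by
    intro t ht
    rw [nk_getD_rotate (by omega), hvgd _ (by rw [hvlen]; exact Nat.mod_lt _ (by omega)),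
      hvlen, Nat.mod_mod_of_dvd _ ⟨T, by ring⟩]
  set s := i' % p with hs
  by_cases hs0 : s = 0
  · -- equal
    have : v = v.rotate i' := by
      refine nk_eq_char (List.length_rotate v i').symm (fun t ht => ?_)
      rw [hvlen] at ht
      rw [hvgd t ht, hrotgd t ht, Nat.add_mod, ← hs, hs0, Nat.add_zero, Nat.mod_mod_of_dvd]
      exact dvd_refl p
    exact le_of_eq this
  · have hsp : s < p := Nat.mod_lt _ hp0
    obtain ⟨j₀, hj₀p, he, hst⟩ := nk_F1 hu (Nat.pos_of_ne_zero hs0) hsp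
    have hT1 : p ≤ T * p := by
      rcases Nat.eq_zero_or_pos T with rfl | hT
      · omega
      · calc p = 1 * p := (one_mul p).symm
          _ ≤ T * p := Nat.mul_le_mul_right p hT
    refine le_of_lt (nk_lt_of_char (List.length_rotate v i').symm
      (j := j₀) (by rw [hvlen]; omega) (fun t ht => ?_) ?_)
    · have e1 : t % p = t := Nat.mod_eq_of_lt (by omega)
      have e2 : (t + i') % p = s + t := by
        rw [Nat.add_mod, e1, ← hs, Nat.mod_eq_of_lt (show t + s < p by omega), Nat.add_comm]
      rw [hvgd t (by omega), hrotgd t (by omega), e1, e2]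
      exact he t ht
    · have e1 : j₀ % p = j₀ := Nat.mod_eq_of_lt (by omega)
      have e2 : (j₀ + i') % p = s + j₀ := by
        rw [Nat.add_mod, e1, ← hs, Nat.mod_eq_of_lt (show j₀ + s < p by omega), Nat.add_comm]
      rw [hvgd j₀ (by omega), hrotgd j₀ (by omega), e1, e2]
      exact hst

lemma nk_take_getD {w : List ℕ} {q t : ℕ} (ht : t < q) (hq : q ≤ w.length) :
    (w.take q).getD t 0 = w.getD t 0 := by
  rw [List.getD_eq_getElem (w.take q) _ (by rw [List.length_take]; omega),
    List.getD_eq_getElem w _ (by omega), List.getElem_take]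

lemma nk_pre_of_pp {k : ℕ} {w : List ℕ} (hlt : ∀ a ∈ w, a < k) (hw : w ≠ [])
    (hpp : NkPP w) : IsPrenecklace k w := by
  obtain ⟨hp0, hpm, hlyn, -⟩ := nk_lyn_spec hw
  set p := lyn w with hpdef
  set u := w.take p with hu
  have hulen : u.length = p := by rw [hu, List.length_take]; omega
  set v := (List.range (w.length * u.length)).map (fun j => u.getD (j % u.length) 0) with hv
  have hvlen : v.length = w.length * p := by simp [hv, hulen]
  have hvgd : ∀ t, t < w.length * p → v.getD t 0 = w.getD (t % p) 0 := by
    intro t ht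
    rw [List.getD_eq_getElem v _ (by omega)]
    simp only [hv, List.getElem_map, List.getElem_range, hulen]
    exact nk_take_getD (Nat.mod_lt _ hp0) hpm
  have hwlen : w.length ≤ w.length * p := Nat.le_mul_of_pos_right _ hp0
  refine ⟨v, ?_, ?_, nk_neck_pow hlyn w.length⟩
  · rw [List.prefix_iff_eq_take]
    refine nk_eq_char (by rw [List.length_take, hvlen]; omega) (fun t ht => ?_)
    rw [nk_take_getD (by omega) (by omega), hvgd t (by omega)]
    exact nk_struct hw hpp t ht
  · intro a ha
    rw [hv] at ha
    obtain ⟨jj, hjj, rfl⟩ := List.mem_map.mp ha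
    have hjlt : jj % u.length < p := by rw [hulen]; exact Nat.mod_lt _ (by omega)
    rw [hu, nk_take_getD hjlt hpm, List.getD_eq_getElem w _ (by omega)]
    exact hlt _ (List.getElem_mem _)

/-- Fundamental theorem of necklaces (extension criterion). -/
theorem prenecklace_extension (n k : ℕ) (hn : 2 ≤ n) (hk : 2 ≤ k) (w : List ℕ)
    (hw : IsPrenecklace k w) (hlen : w.length = n - 1) (p : ℕ) (hp : p = lyn w)
    (b : ℕ) (hb : b < k) :
    IsPrenecklace k (w ++ [b]) ↔ w.getD (n - p - 1) 0 ≤ b := by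
  set m := w.length with hm
  have hm1 : 1 ≤ m := by omega
  have hw0 : w ≠ [] := by intro h; rw [h] at hm; simp [hm] at hm1
  obtain ⟨hp0', hpm', hlyn', -⟩ := nk_lyn_spec hw0
  rw [← hp] at hp0' hpm' hlyn'
  have hst := nk_struct hw0 (nk_pp_of_pre hw)
  rw [← hp] at hst
  set r := m % p with hr
  have hrp : r < p := Nat.mod_lt _ hp0'
  have hnidx : n - p - 1 = m - p := by omega
  have hidx : (m - p) % p = m % p := by
    conv_rhs => rw [show m = (m - p) + p by omega]
    rw [Nat.add_mod_right]
  have hkey : w.getD (n - p - 1) 0 = w.getD r 0 := by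
    rw [hnidx, hst (m - p) (by omega), hidx]
  have hdm : p * (m / p) + r = m := Nat.div_add_mod m p
  have hgdL : ∀ t, t < m → (w ++ [b]).getD t 0 = w.getD t 0 := by
    intro t ht
    rw [List.getD_eq_getElem (w ++ [b]) _ (show t < (w ++ [b]).length by
        rw [List.length_append, List.length_singleton]; omega),
      List.getD_eq_getElem w _ (show t < w.length by omega),
      List.getElem_append_left (show t < w.length by omega)]
  have hgdR : (w ++ [b]).getD m 0 = b := by
    rw [List.getD_eq_getElem (w ++ [b]) _ (show m < (w ++ [b]).length by
        rw [List.length_append, List.length_singleton]; omega),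
      List.getElem_append_right (show w.length ≤ m by omega)]
    simp
  have hlenapp : (w ++ [b]).length = m + 1 := by
    rw [List.length_append, List.length_singleton]
  constructor
  · intro h
    have hpp' := nk_pp_of_pre h
    have := hpp' (m - r) r (by omega) (by omega) (fun t ht => ?_)
    · rw [show (m - r) + r = m by omega, hgdL r (by omega), hgdR] at this
      rw [hkey]
      exact this
    · rw [hgdL t (by omega), hgdL ((m - r) + t) (by omega)]
      have h2 : ((m - r) + t) % p = t := by
        rw [show m - r = p * (m / p) by omega, Nat.add_comm, Nat.add_mul_mod_self_left,
          Nat.mod_eq_of_lt (by omega)]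
      rw [hst ((m - r) + t) (by omega), h2]
  · intro hble
    rw [hkey] at hble
    have hwlt : ∀ a ∈ w, a < k := fun a ha => hw.choose_spec.2.1 a (hw.choose_spec.1.subset ha)
    refine nk_pre_of_pp (fun a ha => ?_) (by simp) ?_
    · rcases List.mem_append.mp ha with h1 | h1
      · exact hwlt a h1
      · simp at h1; omega
    · intro i j hi0 hij heq
      rw [hlenapp] at hij
      have hjm : j < m := by omega
      have heqw : ∀ t, t < j → w.getD t 0 = w.getD (i + t) 0 := by
        intro t ht
        have := heq t ht
        rwa [hgdL t (by omega), hgdL (i + t) (by omega)] at this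
      set s := i % p with hs
      by_cases hs0 : s = 0
      · obtain ⟨c, hc⟩ : p ∣ i := Nat.dvd_of_mod_eq_zero (hs.symm.trans hs0)
        by_cases hcase : i + j < m
        · rw [hgdL j (by omega), hgdL (i + j) (by omega), hst j (by omega),
            hst (i + j) (by omega)]
          have : (i + j) % p = j % p := by
            rw [hc, Nat.add_comm, Nat.add_mul_mod_self_left]
          rw [this]
        · have him : i + j = m := by omega
          rw [him, hgdR, hgdL j (by omega), hst j (by omega)]
          have : j % p = r := by
            rw [hr, show m = j + p * c by omega, Nat.add_mul_mod_self_left]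
          rw [this]
          exact hble
      · have hsp : s < p := Nat.mod_lt _ hp0'
        have hs0' : 0 < s := Nat.pos_of_ne_zero hs0
        have hulen : (w.take p).length = p := by rw [List.length_take]; omega
        obtain ⟨j₀, hj₀p, he, hstx⟩ := nk_F1 hlyn' hs0' (by omega)
        rw [hulen] at hj₀p
        have heu : ∀ t, t < j₀ → w.getD t 0 = w.getD (s + t) 0 := by
          intro t ht
          have := he t ht
          rwa [nk_take_getD (by omega) (by omega), nk_take_getD (by omega) (by omega)] at this
        have hstu : w.getD j₀ 0 < w.getD (s + j₀) 0 := by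
          have := hstx
          rwa [nk_take_getD (by omega) (by omega), nk_take_getD (by omega) (by omega)] at this
        have hmod : ∀ t, t ≤ j₀ → (i + t) % p = s + t := by
          intro t ht
          rw [Nat.add_mod, ← hs, Nat.mod_eq_of_lt (show t < p by omega),
            Nat.mod_eq_of_lt (show s + t < p by omega)]
        have hjj₀ : j ≤ j₀ := by
          by_contra hgt
          push_neg at hgt
          have h1 := heqw j₀ hgt
          have h2 : i + j₀ < m := by omega
          rw [hst (i + j₀) (by omega), hmod j₀ (le_refl _)] at h1
          omega
        have hle2 : w.getD j 0 ≤ w.getD (s + j) 0 := by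
          rcases eq_or_lt_of_le hjj₀ with rfl | hlt2
          · exact le_of_lt hstu
          · exact le_of_eq (heu j hlt2)
        by_cases hcase : i + j < m
        · rw [hgdL j (by omega), hgdL (i + j) (by omega), hst (i + j) (by omega),
            hmod j hjj₀]
          exact hle2
        · have him : i + j = m := by omega
          have hsj : s + j = r := by
            have := hmod j hjj₀
            rw [him, ← hr] at this
            omega
          rw [him, hgdR, hgdL j (by omega)]
          calc w.getD j 0 ≤ w.getD (s + j) 0 := hle2
            _ = w.getD r 0 := by rw [hsj]
            _ ≤ b := hble
end

section
/- Let n ≥ 2, k ≥ 2, let w = a_1⋯a_{n−1} be a prenecklace over {0,…,k−1} with p = lyn(w), and let b ∈ {0,…,k−1} with a_{n−p} ≤ b. Then lyn(wb) = p if b = a_{n−p}, and lyn(wb) = n if a_{n−p} < b. -/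
lemma gd_drop (v : List ℕ) (j l : ℕ) : (v.drop j).getD l 0 = v.getD (j + l) 0 := by
  simp [List.getD_eq_getElem?_getD, List.getElem?_drop]

lemma gd_append_left {u : List ℕ} (v : List ℕ) {l : ℕ} (h : l < u.length) :
    (u ++ v).getD l 0 = u.getD l 0 := by
  simp [List.getD_eq_getElem?_getD, List.getElem?_append, h]

lemma gd_append_right {u : List ℕ} (v : List ℕ) {l : ℕ} (h : u.length ≤ l) :
    (u ++ v).getD l 0 = v.getD (l - u.length) 0 := by
  simp [List.getD_eq_getElem?_getD, List.getElem?_append, Nat.not_lt.2 h]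

lemma gd_take {v : List ℕ} {j l : ℕ} (h : l < j) : (v.take j).getD l 0 = v.getD l 0 := by
  simp [List.getD_eq_getElem?_getD, List.getElem?_take, h]

lemma gd_prefix {u v : List ℕ} (h : u <+: v) {l : ℕ} (hl : l < u.length) :
    v.getD l 0 = u.getD l 0 := by
  obtain ⟨t, rfl⟩ := h; exact gd_append_left t hl

lemma cons_lt_cons_iff (a b : ℕ) (u v : List ℕ) :
    (a::u) < (b::v) ↔ a < b ∨ (a = b ∧ u < v) := by
  constructor
  · intro h
    rcases h with h | h
    · exact Or.inl (by assumption)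
    · exact Or.inr ⟨rfl, by assumption⟩
  · rintro (h | ⟨rfl, h⟩)
    · exact List.Lex.rel h
    · exact List.Lex.cons h

lemma lt_char (u v : List ℕ) : u < v ↔ ∃ i, (∀ l, l < i → u.getD l 0 = v.getD l 0) ∧
    ((i = u.length ∧ i < v.length) ∨
     (i < u.length ∧ i < v.length ∧ u.getD i 0 < v.getD i 0)) := by
  induction u generalizing v with
  | nil =>
    constructor
    · intro h
      refine ⟨0, by omega, Or.inl ⟨rfl, ?_⟩⟩
      cases v with
      | nil => exact absurd h (lt_irrefl _)
      | cons b v => simp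
    · rintro ⟨i, he, ⟨hi, hv⟩ | ⟨hi, _⟩⟩
      · cases v with
        | nil => simp at hv
        | cons b v => exact List.nil_lt_cons b v
      · simp at hi
  | cons a u ih =>
    cases v with
    | nil =>
      constructor
      · intro h; cases h
      · rintro ⟨i, he, ⟨hi, hv⟩ | ⟨_, hv, _⟩⟩ <;> simp at hv
    | cons b v =>
      rw [cons_lt_cons_iff, ih]
      constructor
      · rintro (h | ⟨rfl, i, he, hd⟩)
        · exact ⟨0, by omega, Or.inr ⟨by simp, by simp, by simpa using h⟩⟩
        · refine ⟨i + 1, ?_, ?_⟩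
          · intro l hl
            cases l with
            | zero => simp
            | succ l => simpa using he l (by omega)
          · rcases hd with ⟨h1, h2⟩ | ⟨h1, h2, h3⟩
            · exact Or.inl ⟨by simpa using h1, by simpa using h2⟩
            · exact Or.inr ⟨by simpa using h1, by simpa using h2, by simpa using h3⟩
      · rintro ⟨i, he, hd⟩
        cases i with
        | zero =>
          rcases hd with ⟨h1, h2⟩ | ⟨h1, h2, h3⟩
          · simp at h1
          · exact Or.inl (by simpa using h3)
        | succ i =>
          have hab : a = b := by simpa using he 0 (by omega)
          refine Or.inr ⟨hab, ⟨i, fun l hl => by simpa using he (l+1) (by omega), ?_⟩⟩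
          rcases hd with ⟨h1, h2⟩ | ⟨h1, h2, h3⟩
          · exact Or.inl ⟨by simpa using h1, by simpa using h2⟩
          · exact Or.inr ⟨by simpa using h1, by simpa using h2, by simpa using h3⟩

lemma lt_of_diff {u v : List ℕ} {i : ℕ} (hu : i < u.length) (hv : i < v.length)
    (he : ∀ l, l < i → u.getD l 0 = v.getD l 0) (h : u.getD i 0 < v.getD i 0) : u < v :=
  (lt_char u v).2 ⟨i, he, Or.inr ⟨hu, hv, h⟩⟩

lemma lt_of_pref {u v : List ℕ} (hl : u.length < v.length)
    (he : ∀ l, l < u.length → u.getD l 0 = v.getD l 0) : u < v :=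
  (lt_char u v).2 ⟨u.length, he, Or.inl ⟨rfl, hl⟩⟩

lemma lyndon_lt_drop {x : List ℕ} (hx : IsLyndon x) {m : ℕ} (h0 : 0 < m)
    (hm : m < x.length) : x < x.drop m := by
  set p := x.length with hp
  have h1 : x < x.rotate m := hx.2 m h0 hm
  have hrot : x.rotate m = x.drop m ++ x.take m := List.rotate_eq_drop_append_take (le_of_lt hm)
  by_contra hc
  have hle : x.drop m ≤ x := not_lt.1 hc
  have hlt : x.drop m < x := lt_of_le_of_ne hle (by
    intro h
    have := congrArg List.length h
    simp [List.length_drop] at this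
    omega)
  -- getD formulas for rotate
  have hrg1 : ∀ l, l < p - m → (x.rotate m).getD l 0 = x.getD (m + l) 0 := by
    intro l hl
    rw [hrot, gd_append_left _ (by simp [List.length_drop]; omega), gd_drop]
  have hrg2 : ∀ l, p - m ≤ l → l < p → (x.rotate m).getD l 0 = x.getD (l - (p - m)) 0 := by
    intro l hl1 hl2
    rw [hrot, gd_append_right _ (by rw [List.length_drop]; omega), List.length_drop]
    exact gd_take (by omega)
  rcases (lt_char _ _).1 hlt with ⟨i, he, hd⟩
  rcases hd with ⟨hi1, hi2⟩ | ⟨hi1, hi2, hi3⟩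
  · -- drop m x is a prefix of x : period case
    rw [List.length_drop] at hi1
    have hper : ∀ l, l < p - m → x.getD (m + l) 0 = x.getD l 0 := by
      intro l hl
      have := he l (by omega)
      rwa [gd_drop] at this
    -- analyze x < rotate x m
    rcases (lt_char _ _).1 h1 with ⟨i2, he2, hd2⟩
    rcases hd2 with ⟨hj1, hj2⟩ | ⟨hj1, hj2, hj3⟩
    · rw [List.length_rotate] at hj2; omega
    · rw [List.length_rotate] at hj2
      have hi2pm : ¬ i2 < p - m := by
        intro hcon
        rw [hrg1 i2 hcon, hper i2 hcon] at hj3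
        exact lt_irrefl _ hj3
      push_neg at hi2pm
      set l0 := i2 - (p - m) with hl0
      have hl0m : l0 < m := by omega
      have hx2 : x.getD i2 0 < x.getD l0 0 := by
        rw [hrg2 i2 hi2pm hj2] at hj3; exact hj3
      -- show rotate x (p-m) < x, contradicting Lyndon
      have h3 : x < x.rotate (p - m) := hx.2 (p - m) (by omega) (by omega)
      have h4 : x.rotate (p - m) < x := by
        have hrot' : x.rotate (p - m) = x.drop (p - m) ++ x.take (p - m) :=
          List.rotate_eq_drop_append_take (by omega)
        apply lt_of_diff (i := l0)
        · rw [List.length_rotate]; omega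
        · omega
        · intro l hl
          rw [hrot', gd_append_left _ (by simp [List.length_drop]; omega), gd_drop]
          -- x[(p-m)+l] = x[l]
          have := he2 ((p - m) + l) (by omega)
          rw [hrg2 ((p-m)+l) (by omega) (by omega)] at this
          simpa using this
        · rw [hrot', gd_append_left _ (by simp [List.length_drop]; omega), gd_drop]
          rw [show p - m + l0 = i2 by omega]
          exact hx2
      exact absurd h4 (lt_asymm h3)
  · -- strict difference: rotate x m < x, contradiction
    rw [List.length_drop] at hi1
    have h4 : x.rotate m < x := by
      apply lt_of_diff (i := i)
      · rw [List.length_rotate]; omega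
      · omega
      · intro l hl
        rw [hrg1 l (by omega)]
        have := he l hl
        rwa [gd_drop] at this
      · rw [hrg1 i (by omega)]
        rw [gd_drop] at hi3
        exact hi3
    exact absurd h4 (lt_asymm h1)

lemma duval {z : List ℕ} {p : ℕ} (hp : 0 < p) (hpn : p + 1 ≤ z.length)
    (hlyn : IsLyndon (z.take p))
    (hper : ∀ l, l < z.length - 1 → z.getD l 0 = (z.take p).getD (l % p) 0)
    (hlast : (z.take p).getD ((z.length - 1) % p) 0 < z.getD (z.length - 1) 0) :
    IsLyndon z := by
  set x := z.take p with hxdef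
  set n := z.length with hn
  have hxl : x.length = p := by rw [hxdef, List.length_take]; omega
  refine ⟨?_, ?_⟩
  · intro h
    rw [h] at hn
    simp at hn
    omega
  intro j hj0 hjn
  have key : ∃ i, i ≤ n - 1 - j ∧ (∀ l, l < i → z.getD l 0 = z.getD (j + l) 0) ∧
      z.getD i 0 < z.getD (j + i) 0 := by
    set m := j % p with hm
    set e := n - 1 - j with he
    have hmp : m < p := Nat.mod_lt _ hp
    have hje : j + e = n - 1 := by omega
    by_cases hm0 : m = 0
    · have hjp : j % p = 0 := hm0 ▸ hm.symm
      refine ⟨e, le_refl _, ?_, ?_⟩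
      · intro l hl
        have h2e : (j + l) % p = l % p := by
          conv_lhs => rw [Nat.add_mod, hjp]
          simp [Nat.mod_mod_of_dvd]
        rw [hper l (by omega), hper (j + l) (by omega), h2e]
      · have h3 : (n - 1) % p = e % p := by
          rw [← hje]
          conv_lhs => rw [Nat.add_mod, hjp]
          simp [Nat.mod_mod_of_dvd]
        rw [hper e (by omega), hje, ← h3]
        exact hlast
    · have hxlyn : x < x.drop m := lyndon_lt_drop hlyn (by omega) (by omega)
      rcases (lt_char _ _).1 hxlyn with ⟨i, hie, hid⟩
      have hld : (x.drop m).length = p - m := by rw [List.length_drop, hxl]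
      have hi : i < p - m ∧ x.getD i 0 < x.getD (m + i) 0 := by
        rcases hid with ⟨h1, h2⟩ | ⟨h1, h2, h3⟩
        · rw [hxl] at h1; rw [hld] at h2; omega
        · rw [hld] at h2; rw [gd_drop] at h3; exact ⟨h2, h3⟩
      obtain ⟨hiq, hilt⟩ := hi
      have hieq : ∀ l, l < i → x.getD l 0 = x.getD (m + l) 0 := by
        intro l hl
        have := hie l hl
        rwa [gd_drop] at this
      have hmodeq : ∀ l, l ≤ i → (j + l) % p = m + l := by
        intro l hl
        have h1 : l < p := by omega
        have h2 : m + l < p := by omega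
        rw [Nat.add_mod, ← hm, Nat.mod_eq_of_lt h1, Nat.mod_eq_of_lt h2]
      have heql : ∀ l, l < i → l < e → z.getD l 0 = z.getD (j + l) 0 := by
        intro l h1 h2
        rw [hper l (by omega), hper (j + l) (by omega), hmodeq l (by omega),
          Nat.mod_eq_of_lt (show l < p by omega)]
        exact hieq l h1
      rcases lt_or_ge i e with hie2 | hie2
      · refine ⟨i, by omega, fun l hl => heql l hl (by omega), ?_⟩
        rw [hper i (by omega), hper (j + i) (by omega), hmodeq i (le_refl _),
          Nat.mod_eq_of_lt (show i < p by omega)]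
        exact hilt
      · refine ⟨e, le_refl _, fun l hl => heql l (by omega) hl, ?_⟩
        have h2 : (n - 1) % p = m + e := by
          rw [← hje, hmodeq e hie2]
        have hxe : x.getD e 0 ≤ x.getD (m + e) 0 := by
          rcases eq_or_lt_of_le hie2 with h | h
          · subst h; exact le_of_lt hilt
          · exact le_of_eq (hieq e h)
        rw [hper e (by omega), hje, Nat.mod_eq_of_lt (show e < p by omega)]
        calc x.getD e 0 ≤ x.getD (m + e) 0 := hxe
          _ < z.getD (n - 1) 0 := by rw [← h2]; exact hlast
  obtain ⟨i, hie, heq, hlt⟩ := key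
  rw [List.rotate_eq_drop_append_take (le_of_lt hjn)]
  have hdl : (z.drop j).length = n - j := by rw [List.length_drop, ← hn]
  apply lt_of_diff (i := i)
  · omega
  · rw [List.length_append, hdl, List.length_take]; omega
  · intro l hl
    rw [gd_append_left _ (by rw [hdl]; omega), gd_drop]
    exact heq l hl
  · rw [gd_append_left _ (by rw [hdl]; omega), gd_drop]
    exact hlt

lemma lyndon_of_length_one {l : List ℕ} (h : l.length = 1) : IsLyndon l :=
  ⟨by intro h'; rw [h'] at h; simp at h, fun i h1 h2 => by omega⟩

lemma lyn_spec {w : List ℕ} (hne : w ≠ []) :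
    0 < lyn w ∧ lyn w ≤ w.length ∧ IsLyndon (w.take (lyn w)) := by
  have hwl : 0 < w.length := List.length_pos_iff.2 hne
  have hbdd : BddAbove {p | p ≤ w.length ∧ IsLyndon (w.take p)} :=
    ⟨w.length, fun q hq => hq.1⟩
  have h1 : 1 ∈ {p | p ≤ w.length ∧ IsLyndon (w.take p)} := by
    refine ⟨by omega, lyndon_of_length_one ?_⟩
    rw [List.length_take]
    omega
  have hmem := Nat.sSup_mem ⟨1, h1⟩ hbdd
  have hge : 1 ≤ sSup {p | p ≤ w.length ∧ IsLyndon (w.take p)} := le_csSup hbdd h1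
  exact ⟨by unfold lyn; omega, by unfold lyn; exact hmem.1, by unfold lyn; exact hmem.2⟩

lemma prenecklace_periodic {k : ℕ} {w : List ℕ} (hw : IsPrenecklace k w) (hne : w ≠ []) :
    ∀ i, i < w.length → w.getD i 0 = (w.take (lyn w)).getD (i % lyn w) 0 := by
  obtain ⟨hp0, hpl, hlyn⟩ := lyn_spec hne
  set p := lyn w with hp
  set x := w.take p with hx
  have hxl : x.length = p := by rw [hx, List.length_take]; omega
  intro i
  induction i using Nat.strong_induction_on with
  | _ i IH =>
    intro hi
    by_cases hip : i < p
    · rw [Nat.mod_eq_of_lt hip, hx, gd_take hip]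
    · push_neg at hip
      have him : i % p < p := Nat.mod_lt _ hp0
      have hxi : x.getD (i % p) 0 = w.getD (i - p) 0 := by
        have h1 := IH (i - p) (by omega) (by omega)
        have h2 : i % p = (i - p) % p := Nat.mod_eq_sub_mod hip
        rw [h1, h2]
      rcases lt_trichotomy (w.getD i 0) (x.getD (i % p) 0) with hlt | heq | hgt
      · exfalso
        obtain ⟨v, hpre, _, hneck⟩ := hw
        have hwv : w.length ≤ v.length := hpre.length_le
        set j := p * (i / p) with hj
        have hji : j + i % p = i := by rw [hj]; exact Nat.div_add_mod i p
        have hjp : p ≤ j := by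
          have h1 : 1 ≤ i / p := (Nat.one_le_div_iff hp0).2 hip
          calc p = p * 1 := by ring
            _ ≤ j := by rw [hj]; exact Nat.mul_le_mul_left p h1
        have hjmod : j % p = 0 := by rw [hj]; exact Nat.mul_mod_right p _
        have hjv : j ≤ v.length := by omega
        have hdl : (v.drop j).length = v.length - j := List.length_drop
        have hrot : v.rotate j < v := by
          rw [List.rotate_eq_drop_append_take hjv]
          apply lt_of_diff (i := i % p)
          · rw [List.length_append, hdl, List.length_take]; omega
          · omega
          · intro l hl
            rw [gd_append_left _ (by rw [hdl]; omega), gd_drop]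
            have e1 : v.getD (j + l) 0 = w.getD (j + l) 0 := gd_prefix hpre (by omega)
            have e2 : w.getD (j + l) 0 = x.getD ((j + l) % p) 0 := IH (j + l) (by omega) (by omega)
            have e3 : (j + l) % p = l := by
              rw [Nat.add_mod, hjmod, Nat.mod_eq_of_lt (show l < p by omega)]
              simp [Nat.mod_eq_of_lt (show l < p by omega)]
            have e4 : v.getD l 0 = w.getD l 0 := gd_prefix hpre (by omega)
            have e5 : x.getD l 0 = w.getD l 0 := by rw [hx]; exact gd_take (by omega)
            rw [e1, e2, e3, e4, e5]
          · rw [gd_append_left _ (by rw [hdl]; omega), gd_drop, hji]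
            have e1 : v.getD i 0 = w.getD i 0 := gd_prefix hpre (by omega)
            have e4 : v.getD (i % p) 0 = w.getD (i % p) 0 := gd_prefix hpre (by omega)
            have e5 : x.getD (i % p) 0 = w.getD (i % p) 0 := by
              rw [hx]; exact gd_take him
            rw [e1, e4, ← e5]
            exact hlt
        exact absurd (hneck j) (not_le.2 hrot)
      · exact heq
      · exfalso
        have hzl : (w.take (i + 1)).length = i + 1 := by rw [List.length_take]; omega
        have htt : (w.take (i + 1)).take p = x := by
          rw [List.take_take, min_eq_left (by omega), hx]
        have hz : IsLyndon (w.take (i + 1)) := by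
          apply duval hp0 (by omega)
          · rw [htt]; exact hlyn
          · intro l hl
            rw [hzl] at hl
            rw [gd_take (by omega : l < i + 1), htt]
            exact IH l (by omega) (by omega)
          · rw [hzl, htt]
            simp only [Nat.add_sub_cancel]
            rw [gd_take (by omega : i < i + 1)]
            exact hgt
        have hmem : (i + 1) ∈ {q | q ≤ w.length ∧ IsLyndon (w.take q)} := ⟨by omega, hz⟩
        have hle : i + 1 ≤ lyn w := by
          unfold lyn
          exact le_csSup ⟨w.length, fun q hq => hq.1⟩ hmem
        omega


/-- Fundamental theorem of necklaces: value of `lyn` after extension. -/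
theorem lyn_extension (n k : ℕ) (hn : 2 ≤ n) (hk : 2 ≤ k) (w : List ℕ)
    (hw : IsPrenecklace k w) (hlen : w.length = n - 1) (p : ℕ) (hp : p = lyn w)
    (b : ℕ) (hb : b < k) (hab : w.getD (n - p - 1) 0 ≤ b) :
    (b = w.getD (n - p - 1) 0 → lyn (w ++ [b]) = p) ∧
    (w.getD (n - p - 1) 0 < b → lyn (w ++ [b]) = n) := by
  have hne : w ≠ [] := by
    intro h
    rw [h] at hlen
    simp at hlen
    omega
  obtain ⟨hp0', hpl', hlyn'⟩ := lyn_spec hne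
  rw [← hp] at hp0' hpl' hlyn'
  have hper := prenecklace_periodic hw hne
  rw [← hp] at hper
  set x := w.take p with hx
  set z := w ++ [b] with hz
  have hzl : z.length = n := by rw [hz, List.length_append, hlen]; simp; omega
  have hzw : ∀ l, l < n - 1 → z.getD l 0 = w.getD l 0 := by
    intro l hl
    rw [hz]
    exact gd_append_left _ (by omega)
  have hzb : z.getD (n - 1) 0 = b := by
    rw [hz, gd_append_right _ (by omega : w.length ≤ n - 1), hlen]
    simp
  have hmod : (n - 1) % p = (n - p - 1) % p := by
    rw [Nat.mod_eq_sub_mod (show p ≤ n - 1 by omega)]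
    congr 1
    omega
  have hexp : w.getD (n - p - 1) 0 = x.getD ((n - 1) % p) 0 := by
    rw [hper (n - p - 1) (by omega), hmod]
  have hzper : ∀ l, l < n - 1 → z.getD l 0 = x.getD (l % p) 0 := by
    intro l hl
    rw [hzw l hl]
    exact hper l (by omega)
  have hxz : z.take p = x := by
    rw [hz, List.take_append_of_le_length (by omega), hx]
  have hbdd : BddAbove {q | q ≤ z.length ∧ IsLyndon (z.take q)} :=
    ⟨z.length, fun q hq => hq.1⟩
  constructor
  · intro hbe
    have hall : ∀ l, l < n → z.getD l 0 = x.getD (l % p) 0 := by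
      intro l hl
      rcases lt_or_eq_of_le (show l ≤ n - 1 by omega) with h | h
      · exact hzper l h
      · rw [h, hzb, hbe, hexp]
    have hpm : p ∈ {q | q ≤ z.length ∧ IsLyndon (z.take q)} := by
      refine ⟨by omega, ?_⟩
      rw [hxz]
      exact hlyn'
    have hub : ∀ q ∈ {q | q ≤ z.length ∧ IsLyndon (z.take q)}, q ≤ p := by
      rintro q ⟨hq1, hq2⟩
      by_contra hc
      push_neg at hc
      rw [hzl] at hq1
      set y := z.take q with hy
      have hyl : y.length = q := by rw [hy, List.length_take]; omega
      have hygd : ∀ l, l < q → y.getD l 0 = x.getD (l % p) 0 := by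
        intro l hl
        rw [hy, gd_take hl]
        exact hall l (by omega)
      have h1 : y < y.drop p := lyndon_lt_drop hq2 hp0' (by omega)
      have h2 : y.drop p < y := by
        apply lt_of_pref
        · rw [List.length_drop]; omega
        · intro l hl
          rw [List.length_drop, hyl] at hl
          rw [gd_drop, hygd (p + l) (by omega), hygd l (by omega), Nat.add_mod_left]
      exact absurd h1 (lt_asymm h2)
    show lyn z = p
    unfold lyn
    exact le_antisymm (csSup_le ⟨p, hpm⟩ hub) (le_csSup hbdd hpm)
  · intro hblt
    have hzlyn : IsLyndon z := by
      apply duval hp0' (by omega)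
      · rw [hxz]; exact hlyn'
      · intro l hl
        rw [hzl] at hl
        rw [hxz]
        exact hzper l hl
      · rw [hxz, hzl, hzb, ← hexp]
        exact hblt
    have hnm : n ∈ {q | q ≤ z.length ∧ IsLyndon (z.take q)} := by
      refine ⟨by omega, ?_⟩
      rw [List.take_of_length_le (by omega)]
      exact hzlyn
    show lyn z = n
    unfold lyn
    exact le_antisymm (csSup_le ⟨n, hnm⟩ (fun q hq => by have := hq.1; omega))
      (le_csSup hbdd hnm)
end
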